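/- arXiv:2009.10717 — 3 statements merged into one kernel-verified Lean document; each statement's English description precedes it below -/
import Mathlib

section
/- For any ADSAGA state, E[φ3⁺ + φ4⁺ + φ5⁺] − (φ3 + φ4 + φ5) ≤ −(m·p_min/(4n))·(φ3 + φ4 + φ5) − (η²·m·p_min/n)·(4·m·L_f·η + 16)·Σ_i ‖α*_i‖² − η²·p_min·(4·m·L_f·η + 4)·Σ_j ‖u_j‖² − (16·m·p_min·η²/n)·Σ_j ( ‖g*_j‖² + ‖β*_j‖² ) + (η²·m·p_min/n)·(c3 + 4·c5)·Σ_i ‖∇f_i(x) − ∇f_i(x*)‖², where the superscript ⁺ denotes the value at the state produced by one step with choice (j, i). -/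
open Finset
open scoped RealInnerProductSpace BigOperators

lemma sum_update_sub {α : Type*} [Fintype α] [DecidableEq α] (f g : α → ℝ) (j : α)
    (h : ∀ k, k ≠ j → g k = f k) : ∑ k, g k = (∑ k, f k) + (g j - f j) := by
  classical
  have h1 : ∑ k ∈ Finset.univ.erase j, g k + g j = ∑ k, g k :=
    Finset.sum_erase_add _ _ (Finset.mem_univ j)
  have h2 : ∑ k ∈ Finset.univ.erase j, f k + f j = ∑ k, f k :=
    Finset.sum_erase_add _ _ (Finset.mem_univ j)
  have h3 : ∑ k ∈ Finset.univ.erase j, g k = ∑ k ∈ Finset.univ.erase j, f k :=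
    Finset.sum_congr rfl (fun k hk => h k (Finset.ne_of_mem_erase hk))
  linarith

lemma norm_sub_sq_le_two {E : Type*} [NormedAddCommGroup E] (x y : E) :
    ‖x - y‖ ^ 2 ≤ 2 * ‖x‖ ^ 2 + 2 * ‖y‖ ^ 2 := by
  have h := norm_sub_le x y
  nlinarith [norm_nonneg x, norm_nonneg y, norm_nonneg (x - y), sq_nonneg (‖x‖ - ‖y‖)]
lemma cu_ineq (q aa : ℝ) (hq0 : 0 < q) (hq1 : q ≤ 1) (ha0 : 0 ≤ aa) (ha1 : aa ≤ 1) :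
    (1 - q) * (1 - q / 2) * (1 + aa * q / 2) ≤ 1 - q * (aa + 3) / 4 := by
  nlinarith [mul_nonneg (mul_nonneg hq0.le (by linarith : (0:ℝ) ≤ 1 - q)) (by linarith : (0:ℝ) ≤ 1 - aa),
    mul_nonneg (sq_nonneg q) (by linarith : (0:ℝ) ≤ 1 - aa),
    mul_nonneg (mul_nonneg ha0 (sq_nonneg q)) (by linarith : (0:ℝ) ≤ 1 - q)]

set_option maxHeartbeats 1000000 in
lemma key_u_bound {E : Type*} [NormedAddCommGroup E] [InnerProductSpace ℝ E]
    (u h hp : E) (aa pmn pj pmx : ℝ)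
    (h0 : 0 < pmn) (h1 : pmn ≤ pj) (h2 : pj ≤ pmx) (ha0 : 0 ≤ aa) (ha1 : aa ≤ 1) :
    pj * ‖(1 - pmn / pj) • u + (pmn / pj) • hp - (aa * (1 - pmn / pj)) • h‖ ^ 2 ≤
      (pj - pmn * (aa + 3) / 4) * ‖u‖ ^ 2 + 3 * aa * (pmx / pmn) ^ 2 * pmn * ‖h‖ ^ 2
        + 2 * pmn * ‖hp‖ ^ 2 := by
  have hpj : 0 < pj := lt_of_lt_of_le h0 h1
  set q : ℝ := pmn / pj with hqdef
  have hq0 : 0 < q := div_pos h0 hpj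
  have hq1 : q ≤ 1 := (div_le_one hpj).2 h1
  have hqp : q * pj = pmn := div_mul_cancel₀ _ hpj.ne'
  have hw0 : (0:ℝ) ≤ (1 - q) * (1 - q / 2) := by
    have : (0:ℝ) ≤ 1 - q := by linarith
    have : (0:ℝ) ≤ 1 - q / 2 := by linarith
    positivity
  have hww : (1 - q) * (1 - q / 2) ≤ 1 := by nlinarith [hq0.le, hq1, sq_nonneg q]
  have cu := cu_ineq q aa hq0 hq1 ha0 ha1
  have f1 : pj * ((1 - q) * (1 - q / 2) * (1 + aa * q / 2)) ≤ pj - pmn * (aa + 3) / 4 := by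
    nlinarith [mul_le_mul_of_nonneg_left cu hpj.le]
  have hbase : pj * (2 * aa / q + aa ^ 2) ≤ 3 * aa * (pmx / pmn) ^ 2 * pmn := by
    have e1' : pj * (2 * aa / q) = 2 * aa * (pj ^ 2 / pmn) := by
      rw [hqdef]; field_simp
    have e2' : (pmx / pmn) ^ 2 * pmn = pmx ^ 2 / pmn := by
      field_simp [pow_two]
    have le1 : pj ^ 2 / pmn ≤ pmx ^ 2 / pmn := by gcongr
    have le2 : pj ≤ pmx ^ 2 / pmn := by
      rw [le_div_iff₀ h0]
      nlinarith [mul_le_mul h2 (h1.trans h2) h0.le (h0.le.trans (h1.trans h2))]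
    have la : pj * aa ^ 2 ≤ aa * (pmx ^ 2 / pmn) := by
      nlinarith [mul_le_mul_of_nonneg_right le2 ha0,
        mul_le_mul_of_nonneg_left (by nlinarith : aa ^ 2 ≤ aa) hpj.le]
    nlinarith [mul_le_mul_of_nonneg_left le1 (by linarith : (0:ℝ) ≤ 2 * aa)]
  have f2 : pj * ((1 - q) * (1 - q / 2)) * (2 * aa / q + aa ^ 2)
      ≤ 3 * aa * (pmx / pmn) ^ 2 * pmn := by
    have h2aa : (0:ℝ) ≤ 2 * aa / q + aa ^ 2 := by positivity
    nlinarith [mul_le_mul_of_nonneg_left hww (mul_nonneg hpj.le h2aa)]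
  set X : E := u - aa • h with hXdef
  have hvec : (1 - q) • u + q • hp - (aa * (1 - q)) • h = (1 - q) • X + q • hp := by
    simp [hXdef, smul_sub, smul_smul]
    module
  have e1 : ‖(1 - q) • X + q • hp‖ ^ 2
      = (1 - q) ^ 2 * ‖X‖ ^ 2 + 2 * (q * (1 - q)) * ⟪X, hp⟫ + q ^ 2 * ‖hp‖ ^ 2 := by
    rw [norm_add_sq_real, norm_smul, norm_smul, real_inner_smul_left, real_inner_smul_right,
      Real.norm_eq_abs, Real.norm_eq_abs, abs_of_nonneg (by linarith : (0:ℝ) ≤ 1 - q),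
      abs_of_nonneg hq0.le]
    ring
  have e2 : ‖X‖ ^ 2 = ‖u‖ ^ 2 - 2 * aa * ⟪u, h⟫ + aa ^ 2 * ‖h‖ ^ 2 := by
    rw [hXdef, norm_sub_sq_real, real_inner_smul_right, norm_smul, Real.norm_eq_abs,
      abs_of_nonneg ha0]
    ring
  have i1 : ⟪X, hp⟫ ≤ ‖X‖ * ‖hp‖ := real_inner_le_norm X hp
  have i2 : -(‖u‖ * ‖h‖) ≤ ⟪u, h⟫ := by
    have := abs_real_inner_le_norm u h
    cases' abs_le.1 this with h' _
    linarith
  have step1 : ‖(1 - q) • X + q • hp‖ ^ 2 ≤ (1 - q) * (1 - q / 2) * ‖X‖ ^ 2 + 2 * q * ‖hp‖ ^ 2 := by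
    rw [e1]
    nlinarith [mul_nonneg (mul_nonneg hq0.le (by linarith : (0:ℝ) ≤ 1 - q)) (sq_nonneg (‖X‖ - 2 * ‖hp‖)),
      mul_nonneg (mul_nonneg hq0.le (by linarith : (0:ℝ) ≤ 1 - q)) (sub_nonneg.2 i1),
      sq_nonneg ‖hp‖]
  have step2 : q * ‖X‖ ^ 2 ≤ q * (1 + aa * q / 2) * ‖u‖ ^ 2 + (2 * aa + aa ^ 2 * q) * ‖h‖ ^ 2 := by
    nlinarith [e2, mul_nonneg ha0 (sq_nonneg (q * ‖u‖ - 2 * ‖h‖)),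
      mul_nonneg (mul_nonneg ha0 hq0.le) (by linarith : (0:ℝ) ≤ ⟪u, h⟫ + ‖u‖ * ‖h‖)]
  have step2' : ‖X‖ ^ 2 ≤ (1 + aa * q / 2) * ‖u‖ ^ 2 + (2 * aa / q + aa ^ 2) * ‖h‖ ^ 2 := by
    rw [← mul_le_mul_iff_right₀ hq0]
    have expand : q * ((1 + aa * q / 2) * ‖u‖ ^ 2 + (2 * aa / q + aa ^ 2) * ‖h‖ ^ 2)
        = q * (1 + aa * q / 2) * ‖u‖ ^ 2 + (2 * aa + aa ^ 2 * q) * ‖h‖ ^ 2 := by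
      field_simp
    rw [expand]
    exact step2
  rw [hvec]
  have m1 := mul_le_mul_of_nonneg_left step1 hpj.le
  have m2 := mul_le_mul_of_nonneg_left step2' (mul_nonneg hpj.le hw0)
  have hq2 : q * pj * ‖hp‖ ^ 2 = pmn * ‖hp‖ ^ 2 := by rw [hqp]
  have F1 := mul_le_mul_of_nonneg_right f1 (sq_nonneg ‖u‖)
  have F2 := mul_le_mul_of_nonneg_right f2 (sq_nonneg ‖h‖)
  linarith [m1, m2, F1, F2, hq2]
lemma final_scalar (a R s K c3 c4 N G B A U : ℝ)
    (ha0 : 0 < a) (ha1 : a ≤ 1) (hR : 1 ≤ R) (hK : 0 ≤ K)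
    (hs : s = 16 / 3 * (K + 1)) (hc4 : c4 = (22 + 76 * a * R) * s)
    (hc3 : c3 = (64 + 168 * a * R) * s)
    (hN : 0 ≤ N) (hG : 0 ≤ G) (hB : 0 ≤ B) (hA : 0 ≤ A) (hU : 0 ≤ U) (hBA : B ≤ A) :
    c3 * (a * N - G) + c4 * (2 * G - B - a * (A - B + G))
      + s * (-((a + 3) / 4) * U + 6 * a * R * (G + B) + 4 * a * (N + A - B + G))
    ≤ -(a / 4) * (c3 * G + 2 * c4 * A + s * U) - a * (4 * K + 16) * A - (4 * K + 4) * U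
      - 16 * a * (G + B) + a * (c3 + 4 * s) * N := by
  subst hc3 hc4 hs
  set s : ℝ := 16 / 3 * (K + 1) with hsdef
  have hs163 : 16 / 3 ≤ s := by rw [hsdef]; linarith
  have hs0 : 0 < s := by linarith
  have haR : 0 ≤ a * R := mul_nonneg ha0.le (by linarith)
  have ha2R : 0 ≤ a ^ 2 * R := mul_nonneg (sq_nonneg a) (by linarith)
  have hG0 : 0 ≤ s * (20 + 2 * a + 10 * a * R + 34 * a ^ 2 * R) - 16 * a := by
    nlinarith [mul_nonneg hs0.le haR, mul_nonneg hs0.le ha2R, mul_nonneg hs0.le ha0.le]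
  have hA0 : 0 ≤ a * ((7 + 38 * a * R) * s - 4 * K - 16) := by
    have : 0 ≤ (7 + 38 * a * R) * s - 4 * K - 16 := by
      nlinarith [mul_nonneg haR hs0.le]
    exact mul_nonneg ha0.le this
  have hAB0 : 0 ≤ a * ((7 + 38 * a * R) * s - 4 * K - 16)
      + ((1 - a) * (22 + 76 * a * R) * s - 6 * a * R * s + 4 * a * s - 16 * a) := by
    have key : 0 ≤ a * R * (70 - 38 * a) - 32 * a := by nlinarith [mul_nonneg ha0.le (by linarith : (0:ℝ) ≤ R - 1)]
    nlinarith [mul_nonneg hs0.le key, mul_nonneg hs0.le (mul_nonneg ha0.le (by linarith : (0:ℝ) ≤ 21)), mul_nonneg ha0.le hK]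
  have t1 : 0 ≤ (s * (20 + 2 * a + 10 * a * R + 34 * a ^ 2 * R) - 16 * a) * G :=
    mul_nonneg hG0 hG
  have t4 : ((3:ℝ) / 4 * s - 4 * K - 4) * U = 0 := by rw [hsdef]; ring
  rcases le_or_gt 0 ((1 - a) * (22 + 76 * a * R) * s - 6 * a * R * s + 4 * a * s - 16 * a) with hB0 | hB0
  · have t2 : 0 ≤ a * ((7 + 38 * a * R) * s - 4 * K - 16) * A := mul_nonneg hA0 hA
    have t3 : 0 ≤ ((1 - a) * (22 + 76 * a * R) * s - 6 * a * R * s + 4 * a * s - 16 * a) * B :=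
      mul_nonneg hB0 hB
    linarith [t1, t2, t3, t4]
  · have t3 : ((1 - a) * (22 + 76 * a * R) * s - 6 * a * R * s + 4 * a * s - 16 * a) * A
        ≤ ((1 - a) * (22 + 76 * a * R) * s - 6 * a * R * s + 4 * a * s - 16 * a) * B :=
      mul_le_mul_of_nonpos_left hBA hB0.le
    have t2 : 0 ≤ (a * ((7 + 38 * a * R) * s - 4 * K - 16)
        + ((1 - a) * (22 + 76 * a * R) * s - 6 * a * R * s + 4 * a * s - 16 * a)) * A :=
      mul_nonneg hAB0 hA
    linarith [t1, t2, t3, t4]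

noncomputable section

/-- The state of the ADSAGA algorithm. -/
structure AdsagaState (d n m : ℕ) where
  x : EuclideanSpace ℝ (Fin d)
  u : Fin m → EuclideanSpace ℝ (Fin d)
  g : Fin m → EuclideanSpace ℝ (Fin d)
  beta : Fin m → EuclideanSpace ℝ (Fin d)
  alpha : Fin n → EuclideanSpace ℝ (Fin d)
  idx : Fin m → Fin n

namespace AdsagaState

variable {d n m : ℕ}

/-- `h_j = g_j - β_j`. -/
def hvec (S : AdsagaState d n m) (j : Fin m) : EuclideanSpace ℝ (Fin d) :=
  S.g j - S.beta j

/-- `ᾱ = (1/n) ∑ i, α_i`. -/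
def abar (S : AdsagaState d n m) : EuclideanSpace ℝ (Fin d) :=
  ((1 : ℝ) / n) • ∑ i, S.alpha i

/-- `v = ∑ j, u_j + m • ᾱ`. -/
def v (S : AdsagaState d n m) : EuclideanSpace ℝ (Fin d) :=
  (∑ j, S.u j) + (m : ℝ) • S.abar

/-- One ADSAGA step with choice `(j, i)` (where `i` is meant to lie in `S_j`). -/
def step (gradf : Fin n → EuclideanSpace ℝ (Fin d) → EuclideanSpace ℝ (Fin d))
    (p : Fin m → ℝ) (pmin η : ℝ) (S : AdsagaState d n m) (j : Fin m) (i : Fin n) :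
    AdsagaState d n m where
  x := S.x - (η * pmin / p j) • (S.u j + S.abar)
  alpha := Function.update S.alpha (S.idx j) (S.g j)
  g := Function.update S.g j (gradf i S.x)
  beta := Function.update S.beta j (if i = S.idx j then S.g j else S.alpha i)
  u := Function.update S.u j
    ((1 - pmin / p j) • S.u j
      + (pmin / p j) • (gradf i S.x - (if i = S.idx j then S.g j else S.alpha i))
      - ((m : ℝ) / n * (1 - pmin / p j)) • S.hvec j)
  idx := Function.update S.idx j i

/-- Run `k` ADSAGA steps, with the `t`-th choice given by the index `ω t` (on machine `J (ω t)`). -/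
def run (gradf : Fin n → EuclideanSpace ℝ (Fin d) → EuclideanSpace ℝ (Fin d))
    (p : Fin m → ℝ) (pmin η : ℝ) (J : Fin n → Fin m) (S0 : AdsagaState d n m) :
    (k : ℕ) → (Fin k → Fin n) → AdsagaState d n m
  | 0, _ => S0
  | (k + 1), ω =>
      step gradf p pmin η (run gradf p pmin η J S0 k (fun t => ω t.castSucc))
        (J (ω (Fin.last k))) (ω (Fin.last k))

end AdsagaState

/-- `φ1 = 4mη (f(x) - f(x^*))` where `f` is the average of the `f_i`. -/
def phi1 (f : Fin n → EuclideanSpace ℝ (Fin d) → ℝ) (xstar : EuclideanSpace ℝ (Fin d))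
    {m : ℕ} (η : ℝ) (S : AdsagaState d n m) : ℝ :=
  4 * (m : ℝ) * η * ((((1 : ℝ) / n) * ∑ i, f i S.x) - (((1 : ℝ) / n) * ∑ i, f i xstar))

/-- `φ2 = ‖y‖² - 2η⟪y, v⟫ + 2η²‖v‖²`. -/
def phi2 (xstar : EuclideanSpace ℝ (Fin d)) {n m : ℕ} (η : ℝ) (S : AdsagaState d n m) : ℝ :=
  ‖S.x - xstar‖ ^ 2 - 2 * η * ⟪S.x - xstar, S.v⟫ + 2 * η ^ 2 * ‖S.v‖ ^ 2

/-- `φ3 = η² c3 ∑ j, (pmin / p j) ‖g*_j‖²`. -/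
def phi3 (gradf : Fin n → EuclideanSpace ℝ (Fin d) → EuclideanSpace ℝ (Fin d))
    (xstar : EuclideanSpace ℝ (Fin d)) {m : ℕ} (p : Fin m → ℝ) (pmin η c3 : ℝ)
    (S : AdsagaState d n m) : ℝ :=
  η ^ 2 * c3 * ∑ j, (pmin / p j) * ‖S.g j - gradf (S.idx j) xstar‖ ^ 2

/-- `φ4 = η² c4 (2 ∑ i, (pmin / p (J i)) ‖α*_i‖² - ∑ j, (pmin / p j) ‖β*_j‖²)`. -/
def phi4 (gradf : Fin n → EuclideanSpace ℝ (Fin d) → EuclideanSpace ℝ (Fin d))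
    (xstar : EuclideanSpace ℝ (Fin d)) {m : ℕ} (J : Fin n → Fin m) (p : Fin m → ℝ)
    (pmin η c4 : ℝ) (S : AdsagaState d n m) : ℝ :=
  η ^ 2 * c4 * ((2 * ∑ i, (pmin / p (J i)) * ‖S.alpha i - gradf i xstar‖ ^ 2)
    - ∑ j, (pmin / p j) * ‖S.beta j - gradf (S.idx j) xstar‖ ^ 2)

/-- `φ5 = η² c5 ∑ j, ‖u_j‖²`. -/
def phi5 {d n m : ℕ} (η c5 : ℝ) (S : AdsagaState d n m) : ℝ :=
  η ^ 2 * c5 * ∑ j, ‖S.u j‖ ^ 2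

/-- The total potential `φ = φ1 + φ2 + φ3 + φ4 + φ5`. -/
def phiTot (f : Fin n → EuclideanSpace ℝ (Fin d) → ℝ)
    (gradf : Fin n → EuclideanSpace ℝ (Fin d) → EuclideanSpace ℝ (Fin d))
    (xstar : EuclideanSpace ℝ (Fin d)) {m : ℕ} (J : Fin n → Fin m) (p : Fin m → ℝ)
    (pmin η c3 c4 c5 : ℝ) (S : AdsagaState d n m) : ℝ :=
  phi1 f xstar η S + phi2 xstar η S + phi3 gradf xstar p pmin η c3 S
    + phi4 gradf xstar J p pmin η c4 S + phi5 η c5 S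

end

set_option maxHeartbeats 4000000 in
theorem adsaga_phi345_decrease
    {d n m : ℕ} (hd : 0 < d) (hn : 0 < n) (hm : 0 < m) (hmn : m ∣ n)
    (L Lf μ : ℝ) (hL : 0 < L) (hLf : 0 < Lf) (hμ : 0 < μ)
    (f : Fin n → EuclideanSpace ℝ (Fin d) → ℝ)
    (gradf : Fin n → EuclideanSpace ℝ (Fin d) → EuclideanSpace ℝ (Fin d))
    (hgrad : ∀ i x, HasGradientAt (f i) (gradf i x) x)
    (hconv : ∀ i, ConvexOn ℝ Set.univ (f i))
    (hsmooth : ∀ i (x y : EuclideanSpace ℝ (Fin d)), ‖gradf i x - gradf i y‖ ≤ L * ‖x - y‖)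
    (hFsmooth : ∀ x y : EuclideanSpace ℝ (Fin d),
      ‖((1 : ℝ) / n) • (∑ i, gradf i x) - ((1 : ℝ) / n) • (∑ i, gradf i y)‖ ≤ Lf * ‖x - y‖)
    (hFstrong : ∀ x y : EuclideanSpace ℝ (Fin d),
      μ * ‖x - y‖ ^ 2 ≤
        ⟪((1 : ℝ) / n) • (∑ i, gradf i x) - ((1 : ℝ) / n) • (∑ i, gradf i y), x - y⟫)
    (xstar : EuclideanSpace ℝ (Fin d))
    (hmin : ∀ x : EuclideanSpace ℝ (Fin d),
      (((1 : ℝ) / n) * ∑ i, f i xstar) ≤ ((1 : ℝ) / n) * ∑ i, f i x)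
    (hstarzero : (∑ i, gradf i xstar) = 0)
    (J : Fin n → Fin m)
    (hpart : ∀ j, (Finset.univ.filter (fun i => J i = j)).card = n / m)
    (p : Fin m → ℝ) (hp : ∀ j, 0 < p j) (hpsum : (∑ j, p j) = 1)
    (pmin pmax : ℝ)
    (hpmin : IsLeast (Set.range p) pmin) (hpmax : IsGreatest (Set.range p) pmax)
    (η : ℝ) (hη : 0 < η)
    (S : AdsagaState d n m)
    (hidx : ∀ j, J (S.idx j) = j)
    (hinv : ∀ j, S.alpha (S.idx j) = S.beta j)
    (c3 c4 c5 : ℝ)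
    (hc5 : c5 = (16 / 3) * ((m : ℝ) * Lf * η + 1))
    (hc4 : c4 = (22 + 76 * ((m : ℝ) / n) * (pmax / pmin) ^ 2) * c5)
    (hc3 : c3 = (64 + 168 * ((m : ℝ) / n) * (pmax / pmin) ^ 2) * c5)
    :
    (∑ i : Fin n, p (J i) * ((m : ℝ) / n) *
        (phi3 gradf xstar p pmin η c3 (AdsagaState.step gradf p pmin η S (J i) i)
          + phi4 gradf xstar J p pmin η c4 (AdsagaState.step gradf p pmin η S (J i) i)
          + phi5 η c5 (AdsagaState.step gradf p pmin η S (J i) i)))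
        - (phi3 gradf xstar p pmin η c3 S + phi4 gradf xstar J p pmin η c4 S + phi5 η c5 S)
      ≤ -((m : ℝ) * pmin / (4 * n)) *
            (phi3 gradf xstar p pmin η c3 S + phi4 gradf xstar J p pmin η c4 S + phi5 η c5 S)
        - (η ^ 2 * (m : ℝ) * pmin / n) * (4 * (m : ℝ) * Lf * η + 16) *
            (∑ i, ‖S.alpha i - gradf i xstar‖ ^ 2)
        - η ^ 2 * pmin * (4 * (m : ℝ) * Lf * η + 4) * (∑ j, ‖S.u j‖ ^ 2)
        - (16 * (m : ℝ) * pmin * η ^ 2 / n) *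
            (∑ j, (‖S.g j - gradf (S.idx j) xstar‖ ^ 2
              + ‖S.beta j - gradf (S.idx j) xstar‖ ^ 2))
        + (η ^ 2 * (m : ℝ) * pmin / n) * (c3 + 4 * c5) *
            (∑ i, ‖gradf i S.x - gradf i xstar‖ ^ 2) := by
  classical
  have hnR : (0:ℝ) < n := by exact_mod_cast hn
  have hmR : (0:ℝ) < m := by exact_mod_cast hm
  have hmlen : (m:ℝ) ≤ (n:ℝ) := by exact_mod_cast Nat.le_of_dvd hn hmn
  obtain ⟨j0, hj0⟩ := hpmin.1
  have hpmin0 : 0 < pmin := hj0 ▸ hp j0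
  have hple : ∀ j, pmin ≤ p j := fun j => hpmin.2 ⟨j, rfl⟩
  have hpge : ∀ j, p j ≤ pmax := fun j => hpmax.2 ⟨j, rfl⟩
  have hpminmax : pmin ≤ pmax := hpmin.2 hpmax.1
  have ha0 : (0:ℝ) < (m:ℝ)/n := by positivity
  have ha1 : (m:ℝ)/n ≤ 1 := by rw [div_le_one hnR]; exact hmlen
  have hK0 : (0:ℝ) ≤ (m:ℝ)*Lf*η := by positivity
  have hc5pos : 0 < c5 := by rw [hc5]; linarith
  have hrho : (1:ℝ) ≤ (pmax/pmin)^2 := by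
    have h1 : (1:ℝ) ≤ pmax/pmin := (one_le_div hpmin0).2 hpminmax
    nlinarith
  have hc4pos : 0 ≤ c4 := by
    rw [hc4]
    apply mul_nonneg _ hc5pos.le
    have : (0:ℝ) ≤ 76*((m:ℝ)/n)*(pmax/pmin)^2 := by positivity
    linarith
  have hc3pos : 0 ≤ c3 := by
    rw [hc3]
    apply mul_nonneg _ hc5pos.le
    have : (0:ℝ) ≤ 168*((m:ℝ)/n)*(pmax/pmin)^2 := by positivity
    linarith
  have hcast : ((n / m : ℕ) : ℝ) = (n:ℝ)/(m:ℝ) :=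
    Nat.cast_div hmn (Nat.cast_ne_zero.2 hm.ne')
  have hinj : Function.Injective S.idx := fun j1 j2 hh => by
    rw [← hidx j1, hh, hidx j2]
  have hq1 : ∀ j, pmin / p j ≤ 1 := fun j => (div_le_one (hp j)).2 (hple j)
  have hfib : ∀ F : Fin m → ℝ, ∑ i, F (J i) = ((n/m : ℕ) : ℝ) * ∑ j, F j := by
    intro F
    rw [← Finset.sum_fiberwise_of_maps_to (fun i _ => Finset.mem_univ (J i))
      (fun i => F (J i)), Finset.mul_sum]
    refine Finset.sum_congr rfl fun j _ => ?_
    have hcon : ∀ i ∈ Finset.univ.filter (fun i => J i = j), F (J i) = F j := by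
      intro i hi
      rw [(Finset.mem_filter.1 hi).2]
    rw [Finset.sum_congr rfl hcon, Finset.sum_const, hpart j, nsmul_eq_mul]
  -- the per-step bound
  have key : ∀ i : Fin n,
      p (J i) * ((phi3 gradf xstar p pmin η c3 (AdsagaState.step gradf p pmin η S (J i) i)
          + phi4 gradf xstar J p pmin η c4 (AdsagaState.step gradf p pmin η S (J i) i)
          + phi5 η c5 (AdsagaState.step gradf p pmin η S (J i) i))
        - (phi3 gradf xstar p pmin η c3 S + phi4 gradf xstar J p pmin η c4 S + phi5 η c5 S))
      ≤ η^2 * pmin * (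
          c3 * ‖gradf i S.x - gradf i xstar‖^2
          - c3 * ‖S.g (J i) - gradf (S.idx (J i)) xstar‖^2
          + 2 * c4 * ‖S.g (J i) - gradf (S.idx (J i)) xstar‖^2
          - c4 * ‖S.beta (J i) - gradf (S.idx (J i)) xstar‖^2
          - c4 * ‖(if i = S.idx (J i) then S.g (J i) else S.alpha i) - gradf i xstar‖^2
          - (((m:ℝ)/n + 3)/4) * c5 * ‖S.u (J i)‖^2
          + 6 * ((m:ℝ)/n) * (pmax/pmin)^2 * c5 * ‖S.g (J i) - gradf (S.idx (J i)) xstar‖^2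
          + 6 * ((m:ℝ)/n) * (pmax/pmin)^2 * c5 * ‖S.beta (J i) - gradf (S.idx (J i)) xstar‖^2
          + 4 * c5 * ‖gradf i S.x - gradf i xstar‖^2
          + 4 * c5 * ‖(if i = S.idx (J i) then S.g (J i) else S.alpha i) - gradf i xstar‖^2) := by
    intro i
    have e3 : phi3 gradf xstar p pmin η c3 (AdsagaState.step gradf p pmin η S (J i) i)
        = phi3 gradf xstar p pmin η c3 S
          + η^2*c3*((pmin / p (J i)) * (‖gradf i S.x - gradf i xstar‖^2
              - ‖S.g (J i) - gradf (S.idx (J i)) xstar‖^2)) := by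
      have e0 : phi3 gradf xstar p pmin η c3 (AdsagaState.step gradf p pmin η S (J i) i)
          = η^2*c3*∑ k, (pmin / p k) * ‖Function.update S.g (J i) (gradf i S.x) k
              - gradf (Function.update S.idx (J i) i k) xstar‖^2 := rfl
      rw [e0, sum_update_sub (fun k => (pmin / p k) * ‖S.g k - gradf (S.idx k) xstar‖^2)
        (fun k => (pmin / p k) * ‖Function.update S.g (J i) (gradf i S.x) k
          - gradf (Function.update S.idx (J i) i k) xstar‖^2) (J i)
        (fun k hk => by simp only [Function.update_of_ne hk])]
      rw [Function.update_self, Function.update_self]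
      simp only [phi3]
      ring
    have e5 : phi5 η c5 (AdsagaState.step gradf p pmin η S (J i) i)
        = phi5 η c5 S + η^2*c5*(‖(1 - pmin / p (J i)) • S.u (J i)
            + (pmin / p (J i)) • (gradf i S.x
              - (if i = S.idx (J i) then S.g (J i) else S.alpha i))
            - ((m:ℝ)/(n:ℝ) * (1 - pmin / p (J i))) • S.hvec (J i)‖^2 - ‖S.u (J i)‖^2) := by
      have e0 : phi5 η c5 (AdsagaState.step gradf p pmin η S (J i) i)
          = η^2*c5*∑ k, ‖Function.update S.u (J i) ((1 - pmin / p (J i)) • S.u (J i)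
              + (pmin / p (J i)) • (gradf i S.x
                - (if i = S.idx (J i) then S.g (J i) else S.alpha i))
              - ((m:ℝ)/(n:ℝ) * (1 - pmin / p (J i))) • S.hvec (J i)) k‖^2 := rfl
      rw [e0, sum_update_sub (fun k => ‖S.u k‖^2)
        (fun k => ‖Function.update S.u (J i) ((1 - pmin / p (J i)) • S.u (J i)
            + (pmin / p (J i)) • (gradf i S.x
              - (if i = S.idx (J i) then S.g (J i) else S.alpha i))
            - ((m:ℝ)/(n:ℝ) * (1 - pmin / p (J i))) • S.hvec (J i)) k‖^2) (J i)
        (fun k hk => by simp only [Function.update_of_ne hk])]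
      rw [Function.update_self]
      simp only [phi5]
      ring
    have e4 : phi4 gradf xstar J p pmin η c4 (AdsagaState.step gradf p pmin η S (J i) i)
        = phi4 gradf xstar J p pmin η c4 S
          + η^2*c4*((pmin / p (J i)) * (2 * ‖S.g (J i) - gradf (S.idx (J i)) xstar‖^2
              - ‖S.beta (J i) - gradf (S.idx (J i)) xstar‖^2
              - ‖(if i = S.idx (J i) then S.g (J i) else S.alpha i) - gradf i xstar‖^2)) := by
      have e0 : phi4 gradf xstar J p pmin η c4 (AdsagaState.step gradf p pmin η S (J i) i)
          = η^2*c4*((2 * ∑ i', (pmin / p (J i')) *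
                ‖Function.update S.alpha (S.idx (J i)) (S.g (J i)) i' - gradf i' xstar‖^2)
              - ∑ k, (pmin / p k) * ‖Function.update S.beta (J i)
                  (if i = S.idx (J i) then S.g (J i) else S.alpha i) k
                - gradf (Function.update S.idx (J i) i k) xstar‖^2) := rfl
      rw [e0, sum_update_sub (fun i' => (pmin / p (J i')) * ‖S.alpha i' - gradf i' xstar‖^2)
        (fun i' => (pmin / p (J i')) *
          ‖Function.update S.alpha (S.idx (J i)) (S.g (J i)) i' - gradf i' xstar‖^2)
        (S.idx (J i)) (fun k hk => by simp only [Function.update_of_ne hk]),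
        sum_update_sub (fun k => (pmin / p k) * ‖S.beta k - gradf (S.idx k) xstar‖^2)
        (fun k => (pmin / p k) * ‖Function.update S.beta (J i)
            (if i = S.idx (J i) then S.g (J i) else S.alpha i) k
          - gradf (Function.update S.idx (J i) i k) xstar‖^2) (J i)
        (fun k hk => by simp only [Function.update_of_ne hk])]
      rw [Function.update_self, Function.update_self, Function.update_self]
      rw [hidx (J i), hinv (J i)]
      simp only [phi4]
      ring
    have hub : p (J i) * ‖(1 - pmin / p (J i)) • S.u (J i)
          + (pmin / p (J i)) • (gradf i S.x
            - (if i = S.idx (J i) then S.g (J i) else S.alpha i))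
          - ((m:ℝ)/(n:ℝ) * (1 - pmin / p (J i))) • S.hvec (J i)‖^2
        ≤ (p (J i) - pmin * ((m:ℝ)/(n:ℝ) + 3) / 4) * ‖S.u (J i)‖^2
          + 3 * ((m:ℝ)/(n:ℝ)) * (pmax/pmin)^2 * pmin * ‖S.hvec (J i)‖^2
          + 2 * pmin * ‖gradf i S.x
              - (if i = S.idx (J i) then S.g (J i) else S.alpha i)‖^2 :=
      key_u_bound _ _ _ _ _ _ _ hpmin0 (hple (J i)) (hpge (J i)) ha0.le ha1
    have hhv : ‖S.hvec (J i)‖^2 ≤ 2*‖S.g (J i) - gradf (S.idx (J i)) xstar‖^2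
        + 2*‖S.beta (J i) - gradf (S.idx (J i)) xstar‖^2 := by
      have hrw : S.hvec (J i) = (S.g (J i) - gradf (S.idx (J i)) xstar)
          - (S.beta (J i) - gradf (S.idx (J i)) xstar) := by
        show S.g (J i) - S.beta (J i) = _
        abel
      rw [hrw]
      exact norm_sub_sq_le_two _ _
    have hhp : ‖gradf i S.x - (if i = S.idx (J i) then S.g (J i) else S.alpha i)‖^2
        ≤ 2*‖gradf i S.x - gradf i xstar‖^2
          + 2*‖(if i = S.idx (J i) then S.g (J i) else S.alpha i) - gradf i xstar‖^2 := by
      have hrw : gradf i S.x - (if i = S.idx (J i) then S.g (J i) else S.alpha i)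
          = (gradf i S.x - gradf i xstar)
            - ((if i = S.idx (J i) then S.g (J i) else S.alpha i) - gradf i xstar) := by
        abel
      rw [hrw]
      exact norm_sub_sq_le_two _ _
    have hub2 : p (J i) * ‖(1 - pmin / p (J i)) • S.u (J i)
          + (pmin / p (J i)) • (gradf i S.x
            - (if i = S.idx (J i) then S.g (J i) else S.alpha i))
          - ((m:ℝ)/(n:ℝ) * (1 - pmin / p (J i))) • S.hvec (J i)‖^2
        ≤ (p (J i) - pmin * ((m:ℝ)/(n:ℝ) + 3) / 4) * ‖S.u (J i)‖^2
          + 3 * ((m:ℝ)/(n:ℝ)) * (pmax/pmin)^2 * pmin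
              * (2*‖S.g (J i) - gradf (S.idx (J i)) xstar‖^2
                + 2*‖S.beta (J i) - gradf (S.idx (J i)) xstar‖^2)
          + 2 * pmin * (2*‖gradf i S.x - gradf i xstar‖^2
              + 2*‖(if i = S.idx (J i) then S.g (J i) else S.alpha i) - gradf i xstar‖^2) := by
      have t1 := mul_le_mul_of_nonneg_left hhv
        (by positivity : (0:ℝ) ≤ 3 * ((m:ℝ)/(n:ℝ)) * (pmax/pmin)^2 * pmin)
      have t2 := mul_le_mul_of_nonneg_left hhp (by positivity : (0:ℝ) ≤ 2 * pmin)
      linarith [hub]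
    rw [e3, e4, e5]
    have q3 : p (J i) * (η^2*c3*((pmin / p (J i)) * (‖gradf i S.x - gradf i xstar‖^2
        - ‖S.g (J i) - gradf (S.idx (J i)) xstar‖^2)))
        = η^2*c3*(pmin * (‖gradf i S.x - gradf i xstar‖^2
          - ‖S.g (J i) - gradf (S.idx (J i)) xstar‖^2)) := by
      field_simp [(hp (J i)).ne']
    have q4 : p (J i) * (η^2*c4*((pmin / p (J i)) *
        (2 * ‖S.g (J i) - gradf (S.idx (J i)) xstar‖^2
          - ‖S.beta (J i) - gradf (S.idx (J i)) xstar‖^2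
          - ‖(if i = S.idx (J i) then S.g (J i) else S.alpha i) - gradf i xstar‖^2)))
        = η^2*c4*(pmin * (2 * ‖S.g (J i) - gradf (S.idx (J i)) xstar‖^2
          - ‖S.beta (J i) - gradf (S.idx (J i)) xstar‖^2
          - ‖(if i = S.idx (J i) then S.g (J i) else S.alpha i) - gradf i xstar‖^2)) := by
      have hne := (hp (J i)).ne'
      rw [mul_left_comm, ← mul_assoc (p (J i)), mul_div_assoc', mul_comm (p (J i)) pmin,
        mul_div_assoc, div_self hne, mul_one]
    have hc5u := mul_le_mul_of_nonneg_left hub2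
      (mul_nonneg (sq_nonneg η) hc5pos.le)
    linarith [q3, q4, hc5u]

  -- named big sums
  set NN := ∑ i, ‖gradf i S.x - gradf i xstar‖ ^ 2 with hNNdef
  set AA := ∑ i, ‖S.alpha i - gradf i xstar‖ ^ 2 with hAAdef
  set GG := ∑ j, ‖S.g j - gradf (S.idx j) xstar‖ ^ 2 with hGGdef
  set BB := ∑ j, ‖S.beta j - gradf (S.idx j) xstar‖ ^ 2 with hBBdef
  set UU := ∑ j, ‖S.u j‖ ^ 2 with hUUdef
  have hNN0 : 0 ≤ NN := by rw [hNNdef]; exact Finset.sum_nonneg fun i _ => by positivity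
  have hAA0 : 0 ≤ AA := by rw [hAAdef]; exact Finset.sum_nonneg fun i _ => by positivity
  have hGG0 : 0 ≤ GG := by rw [hGGdef]; exact Finset.sum_nonneg fun j _ => by positivity
  have hBB0 : 0 ≤ BB := by rw [hBBdef]; exact Finset.sum_nonneg fun j _ => by positivity
  have hUU0 : 0 ≤ UU := by rw [hUUdef]; exact Finset.sum_nonneg fun j _ => by positivity
  have hBA : BB ≤ AA := by
    rw [hAAdef, hBBdef]
    have h1 : ∑ j, ‖S.beta j - gradf (S.idx j) xstar‖ ^ 2
        = ∑ j, ‖S.alpha (S.idx j) - gradf (S.idx j) xstar‖ ^ 2 :=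
      Finset.sum_congr rfl fun j _ => by rw [hinv j]
    have h2 : ∑ j, ‖S.alpha (S.idx j) - gradf (S.idx j) xstar‖ ^ 2
        = ∑ i ∈ Finset.image S.idx Finset.univ, ‖S.alpha i - gradf i xstar‖ ^ 2 :=
      (Finset.sum_image (f := fun i => ‖S.alpha i - gradf i xstar‖ ^ 2) (fun x _ y _ hxy => hinj hxy)).symm
    rw [h1, h2]
    exact Finset.sum_le_sum_of_subset_of_nonneg (Finset.subset_univ _)
      (fun i _ _ => by positivity)
  have hGfib : ∑ i, ‖S.g (J i) - gradf (S.idx (J i)) xstar‖ ^ 2 = ((n:ℝ)/m) * GG := by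
    rw [hGGdef, ← hcast]; exact hfib (fun j => ‖S.g j - gradf (S.idx j) xstar‖ ^ 2)
  have hBfib : ∑ i, ‖S.beta (J i) - gradf (S.idx (J i)) xstar‖ ^ 2 = ((n:ℝ)/m) * BB := by
    rw [hBBdef, ← hcast]; exact hfib (fun j => ‖S.beta j - gradf (S.idx j) xstar‖ ^ 2)
  have hUfib : ∑ i, ‖S.u (J i)‖ ^ 2 = ((n:ℝ)/m) * UU := by
    rw [hUUdef, ← hcast]; exact hfib (fun j => ‖S.u j‖ ^ 2)
  have hBPsum : ∑ i, ‖(if i = S.idx (J i) then S.g (J i) else S.alpha i) - gradf i xstar‖ ^ 2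
      = AA - BB + GG := by
    have hsplit : ∀ i : Fin n,
        ‖(if i = S.idx (J i) then S.g (J i) else S.alpha i) - gradf i xstar‖ ^ 2
        = ‖S.alpha i - gradf i xstar‖ ^ 2
          + (if i = S.idx (J i) then ‖S.g (J i) - gradf (S.idx (J i)) xstar‖ ^ 2
              - ‖S.alpha i - gradf i xstar‖ ^ 2 else 0) := by
      intro i
      by_cases h : i = S.idx (J i)
      · rw [if_pos h, if_pos h, ← h]
        ring
      · rw [if_neg h, if_neg h]
        ring
    rw [Finset.sum_congr rfl fun i _ => hsplit i, Finset.sum_add_distrib]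
    have himg : Finset.univ.filter (fun i => i = S.idx (J i))
        = Finset.image S.idx Finset.univ := by
      ext i
      simp only [Finset.mem_filter, Finset.mem_image, Finset.mem_univ, true_and]
      constructor
      · intro h; exact ⟨J i, h.symm⟩
      · rintro ⟨j, rfl⟩; rw [hidx]
    have h1 : ∑ i, (if i = S.idx (J i) then ‖S.g (J i) - gradf (S.idx (J i)) xstar‖ ^ 2
          - ‖S.alpha i - gradf i xstar‖ ^ 2 else 0)
        = ∑ j, (‖S.g j - gradf (S.idx j) xstar‖ ^ 2
            - ‖S.beta j - gradf (S.idx j) xstar‖ ^ 2) := by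
      rw [← Finset.sum_filter, himg, Finset.sum_image (f := fun i => ‖S.g (J i) - gradf (S.idx (J i)) xstar‖ ^ 2 - ‖S.alpha i - gradf i xstar‖ ^ 2) (fun x _ y _ hxy => hinj hxy)]
      refine Finset.sum_congr rfl fun j _ => ?_
      rw [hidx j, hinv j]
    rw [h1, Finset.sum_sub_distrib, hAAdef, hGGdef, hBBdef]
    ring
  have hone : ((m:ℝ)/n) * (∑ i, p (J i)) = 1 := by
    rw [hfib p, hpsum, hcast, mul_one]
    field_simp
  have lhs_eq : (∑ i : Fin n, p (J i) * ((m : ℝ) / n) *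
        (phi3 gradf xstar p pmin η c3 (AdsagaState.step gradf p pmin η S (J i) i)
          + phi4 gradf xstar J p pmin η c4 (AdsagaState.step gradf p pmin η S (J i) i)
          + phi5 η c5 (AdsagaState.step gradf p pmin η S (J i) i)))
        - (phi3 gradf xstar p pmin η c3 S + phi4 gradf xstar J p pmin η c4 S + phi5 η c5 S)
      = ((m:ℝ)/n) * ∑ i : Fin n, p (J i) *
          ((phi3 gradf xstar p pmin η c3 (AdsagaState.step gradf p pmin η S (J i) i)
            + phi4 gradf xstar J p pmin η c4 (AdsagaState.step gradf p pmin η S (J i) i)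
            + phi5 η c5 (AdsagaState.step gradf p pmin η S (J i) i))
          - (phi3 gradf xstar p pmin η c3 S + phi4 gradf xstar J p pmin η c4 S
            + phi5 η c5 S)) := by
    rw [Finset.mul_sum]
    rw [Finset.sum_congr rfl (fun i (_ : i ∈ (Finset.univ : Finset (Fin n))) =>
      (by ring :
        ((m:ℝ)/n) * (p (J i) *
          ((phi3 gradf xstar p pmin η c3 (AdsagaState.step gradf p pmin η S (J i) i)
            + phi4 gradf xstar J p pmin η c4 (AdsagaState.step gradf p pmin η S (J i) i)
            + phi5 η c5 (AdsagaState.step gradf p pmin η S (J i) i))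
          - (phi3 gradf xstar p pmin η c3 S + phi4 gradf xstar J p pmin η c4 S
            + phi5 η c5 S)))
        = p (J i) * ((m : ℝ) / n) *
            (phi3 gradf xstar p pmin η c3 (AdsagaState.step gradf p pmin η S (J i) i)
              + phi4 gradf xstar J p pmin η c4 (AdsagaState.step gradf p pmin η S (J i) i)
              + phi5 η c5 (AdsagaState.step gradf p pmin η S (J i) i))
          - ((m:ℝ)/n) * p (J i) *
            (phi3 gradf xstar p pmin η c3 S + phi4 gradf xstar J p pmin η c4 S
              + phi5 η c5 S)))]
    rw [Finset.sum_sub_distrib, ← Finset.sum_mul, ← Finset.mul_sum, hone, one_mul]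
  rw [lhs_eq]
  have hWsum : (∑ i : Fin n, η^2 * pmin * (
          c3 * ‖gradf i S.x - gradf i xstar‖^2
          - c3 * ‖S.g (J i) - gradf (S.idx (J i)) xstar‖^2
          + 2 * c4 * ‖S.g (J i) - gradf (S.idx (J i)) xstar‖^2
          - c4 * ‖S.beta (J i) - gradf (S.idx (J i)) xstar‖^2
          - c4 * ‖(if i = S.idx (J i) then S.g (J i) else S.alpha i) - gradf i xstar‖^2
          - (((m:ℝ)/n + 3)/4) * c5 * ‖S.u (J i)‖^2
          + 6 * ((m:ℝ)/n) * (pmax/pmin)^2 * c5 * ‖S.g (J i) - gradf (S.idx (J i)) xstar‖^2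
          + 6 * ((m:ℝ)/n) * (pmax/pmin)^2 * c5 * ‖S.beta (J i) - gradf (S.idx (J i)) xstar‖^2
          + 4 * c5 * ‖gradf i S.x - gradf i xstar‖^2
          + 4 * c5 * ‖(if i = S.idx (J i) then S.g (J i) else S.alpha i) - gradf i xstar‖^2))
      = η^2 * pmin * (
          c3 * NN - c3 * (((n:ℝ)/m) * GG) + 2 * c4 * (((n:ℝ)/m) * GG)
          - c4 * (((n:ℝ)/m) * BB) - c4 * (AA - BB + GG)
          - (((m:ℝ)/n + 3)/4) * c5 * (((n:ℝ)/m) * UU)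
          + 6 * ((m:ℝ)/n) * (pmax/pmin)^2 * c5 * (((n:ℝ)/m) * GG)
          + 6 * ((m:ℝ)/n) * (pmax/pmin)^2 * c5 * (((n:ℝ)/m) * BB)
          + 4 * c5 * NN + 4 * c5 * (AA - BB + GG)) := by
    rw [← Finset.mul_sum]
    congr 1
    simp only [Finset.sum_add_distrib, Finset.sum_sub_distrib, ← Finset.mul_sum]
    rw [hGfib, hBfib, hUfib, hBPsum, ← hNNdef]
  refine le_trans (mul_le_mul_of_nonneg_left (Finset.sum_le_sum fun i _ => key i) ha0.le) ?_
  rw [hWsum]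
  have hstep2 : ((m:ℝ)/n) * (η^2 * pmin * (
          c3 * NN - c3 * (((n:ℝ)/m) * GG) + 2 * c4 * (((n:ℝ)/m) * GG)
          - c4 * (((n:ℝ)/m) * BB) - c4 * (AA - BB + GG)
          - (((m:ℝ)/n + 3)/4) * c5 * (((n:ℝ)/m) * UU)
          + 6 * ((m:ℝ)/n) * (pmax/pmin)^2 * c5 * (((n:ℝ)/m) * GG)
          + 6 * ((m:ℝ)/n) * (pmax/pmin)^2 * c5 * (((n:ℝ)/m) * BB)
          + 4 * c5 * NN + 4 * c5 * (AA - BB + GG)))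
      = η^2 * pmin * (c3 * ((m:ℝ)/n * NN - GG)
          + c4 * (2 * GG - BB - (m:ℝ)/n * (AA - BB + GG))
          + c5 * (-(((m:ℝ)/n + 3) / 4) * UU
            + 6 * ((m:ℝ)/n) * (pmax/pmin)^2 * (GG + BB)
            + 4 * ((m:ℝ)/n) * (NN + AA - BB + GG))) := by
    field_simp
    ring
  rw [hstep2]
  have hPQ : c3 * ((m:ℝ)/n * NN - GG)
      + c4 * (2 * GG - BB - (m:ℝ)/n * (AA - BB + GG))
      + c5 * (-(((m:ℝ)/n + 3) / 4) * UU
        + 6 * ((m:ℝ)/n) * (pmax/pmin)^2 * (GG + BB)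
        + 4 * ((m:ℝ)/n) * (NN + AA - BB + GG))
      ≤ -((m:ℝ)/n / 4) * (c3 * GG + 2 * c4 * AA + c5 * UU)
        - (m:ℝ)/n * (4 * ((m:ℝ) * Lf * η) + 16) * AA
        - (4 * ((m:ℝ) * Lf * η) + 4) * UU
        - 16 * ((m:ℝ)/n) * (GG + BB) + (m:ℝ)/n * (c3 + 4 * c5) * NN :=
    final_scalar ((m:ℝ)/n) ((pmax/pmin)^2) c5 ((m:ℝ)*Lf*η) c3 c4 NN GG BB AA UU
      ha0 ha1 hrho hK0 hc5 hc4 hc3 hNN0 hGG0 hBB0 hAA0 hUU0 hBA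
  refine le_trans (mul_le_mul_of_nonneg_left hPQ
    (mul_nonneg (sq_nonneg η) hpmin0.le)) ?_
  have hGB : (∑ j, (‖S.g j - gradf (S.idx j) xstar‖ ^ 2
      + ‖S.beta j - gradf (S.idx j) xstar‖ ^ 2)) = GG + BB := by
    rw [hGGdef, hBBdef, ← Finset.sum_add_distrib]
  rw [hGB]
  have h3 : phi3 gradf xstar p pmin η c3 S ≤ η^2 * (c3 * GG) := by
    have hsum : ∑ j, (pmin / p j) * ‖S.g j - gradf (S.idx j) xstar‖ ^ 2 ≤ GG := by
      rw [hGGdef]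
      exact Finset.sum_le_sum fun j _ => mul_le_of_le_one_left (by positivity) (hq1 j)
    have h := mul_le_mul_of_nonneg_left hsum (mul_nonneg (sq_nonneg η) hc3pos)
    calc phi3 gradf xstar p pmin η c3 S
        = η^2 * c3 * (∑ j, (pmin / p j) * ‖S.g j - gradf (S.idx j) xstar‖ ^ 2) := rfl
      _ ≤ η^2 * (c3 * GG) := by linarith [h]
  have h4 : phi4 gradf xstar J p pmin η c4 S ≤ η^2 * (c4 * (2 * AA)) := by
    have hsum1 : ∑ i, (pmin / p (J i)) * ‖S.alpha i - gradf i xstar‖ ^ 2 ≤ AA := by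
      rw [hAAdef]
      exact Finset.sum_le_sum fun i _ => mul_le_of_le_one_left (by positivity) (hq1 (J i))
    have hsum2 : (0:ℝ) ≤ ∑ j, (pmin / p j) * ‖S.beta j - gradf (S.idx j) xstar‖ ^ 2 :=
      Finset.sum_nonneg fun j _ =>
        mul_nonneg (div_nonneg hpmin0.le (hp j).le) (by positivity)
    have h := mul_le_mul_of_nonneg_left hsum1 (mul_nonneg (sq_nonneg η) hc4pos)
    have h2 := mul_nonneg (mul_nonneg (sq_nonneg η) hc4pos) hsum2
    calc phi4 gradf xstar J p pmin η c4 S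
        = η^2 * c4 * ((2 * ∑ i, (pmin / p (J i)) * ‖S.alpha i - gradf i xstar‖ ^ 2)
            - ∑ j, (pmin / p j) * ‖S.beta j - gradf (S.idx j) xstar‖ ^ 2) := rfl
      _ ≤ η^2 * (c4 * (2 * AA)) := by linarith [h, h2]
  have h5 : phi5 η c5 S = η^2 * (c5 * UU) := by
    show η^2 * c5 * (∑ j, ‖S.u j‖ ^ 2) = η^2 * (c5 * UU)
    rw [← hUUdef]
    ring
  have hφS : phi3 gradf xstar p pmin η c3 S + phi4 gradf xstar J p pmin η c4 S
      + phi5 η c5 S ≤ η^2 * (c3 * GG + 2 * c4 * AA + c5 * UU) := by linarith [h3, h4, h5]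
  have hmφ := mul_le_mul_of_nonneg_left hφS
    (div_nonneg (mul_nonneg hmR.le hpmin0.le) (by linarith : (0:ℝ) ≤ 4 * (n:ℝ)))
  have hidQ : η^2 * pmin * (-((m:ℝ)/n / 4) * (c3 * GG + 2 * c4 * AA + c5 * UU)
        - (m:ℝ)/n * (4 * ((m:ℝ) * Lf * η) + 16) * AA
        - (4 * ((m:ℝ) * Lf * η) + 4) * UU
        - 16 * ((m:ℝ)/n) * (GG + BB) + (m:ℝ)/n * (c3 + 4 * c5) * NN)
      = -((m:ℝ) * pmin / (4 * n)) * (η^2 * (c3 * GG + 2 * c4 * AA + c5 * UU))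
        - (η^2 * (m:ℝ) * pmin / n) * (4 * (m:ℝ) * Lf * η + 16) * AA
        - η^2 * pmin * (4 * (m:ℝ) * Lf * η + 4) * UU
        - (16 * (m:ℝ) * pmin * η^2 / n) * (GG + BB)
        + (η^2 * (m:ℝ) * pmin / n) * (c3 + 4 * c5) * NN := by
    field_simp
  linarith [hmφ, hidQ]
end

section
/- For any minibatch-SAGA state, E_B[φ1⁺] − φ1 ≤ −2·m·η·⟨y, ∇f(x)⟩ + η²·m²·‖∇f(x)‖² + 2·η²·m·L·⟨y, ∇f(x)⟩ + (2·η²·m/n)·Σ_{i=1}^n ‖α_i − ∇f_i(x*)‖², where φ1⁺ denotes the value of φ1 at the state produced by one step with batch B. -/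
open Finset
open scoped RealInnerProductSpace BigOperators
open Finset
open scoped RealInnerProductSpace BigOperators

section Aux
variable {d : ℕ}
local notation "E" => EuclideanSpace ℝ (Fin d)

-- derivative of f along a line
lemma line_hasDerivAt (f : E → ℝ) (g : E → E) (hg : ∀ z, HasGradientAt f (g z) z)
    (y u : E) (t : ℝ) :
    HasDerivAt (fun s : ℝ => f (y + s • u)) ⟪g (y + t • u), u⟫ t := by
  have hc : HasDerivAt (fun s : ℝ => y + s • u) u t := by
    simpa using ((hasDerivAt_id t).smul_const u).const_add y
  have := ((hg (y + t • u)).hasFDerivAt.comp_hasDerivAt t hc)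
  exact this

lemma first_order (f : E → ℝ) (g : E → E) (hconv : ConvexOn ℝ Set.univ f)
    (hg : ∀ z, HasGradientAt f (g z) z) (y x : E) :
    f y + ⟪g y, x - y⟫ ≤ f x := by
  set u := x - y
  have hφc : ConvexOn ℝ Set.univ (fun s : ℝ => f (y + s • u)) := by
    have := hconv.comp_affineMap (AffineMap.lineMap y x : ℝ →ᵃ[ℝ] E)
    simpa [Function.comp_def, AffineMap.lineMap_apply, u, add_comm] using this
  have hd := line_hasDerivAt f g hg y u 0
  have hs := hφc.le_slope_of_hasDerivAt (Set.mem_univ (0:ℝ)) (Set.mem_univ (1:ℝ)) one_pos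
    (by simpa using hd)
  rw [slope_def_field] at hs
  simp only [zero_smul, add_zero, one_smul] at hs
  have h1 : y + u = x := by simp [u]
  rw [h1] at hs
  have : ⟪g y, u⟫ ≤ f x - f y := by
    simpa [div_one] using hs
  linarith

lemma descent_lemma (f : E → ℝ) (g : E → E) (L : ℝ) (hL : 0 < L)
    (hg : ∀ z, HasGradientAt f (g z) z)
    (hLip : ∀ a b : E, ‖g a - g b‖ ≤ L * ‖a - b‖) (y x : E) :
    f x ≤ f y + ⟪g y, x - y⟫ + L / 2 * ‖x - y‖ ^ 2 := by
  set u := x - y with hu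
  set ψ : ℝ → ℝ := fun t => f (y + t • u) - t * ⟪g y, u⟫ - L / 2 * t ^ 2 * ‖u‖ ^ 2 with hψ
  have hψ' : ∀ t : ℝ, HasDerivAt ψ (⟪g (y + t • u), u⟫ - ⟪g y, u⟫ - L * t * ‖u‖ ^ 2) t := by
    intro t
    have h1 := line_hasDerivAt f g hg y u t
    have h2 : HasDerivAt (fun t : ℝ => t * ⟪g y, u⟫) ⟪g y, u⟫ t := by
      simpa using (hasDerivAt_id t).mul_const ⟪g y, u⟫
    have h3 : HasDerivAt (fun t : ℝ => L / 2 * t ^ 2 * ‖u‖ ^ 2) (L * t * ‖u‖ ^ 2) t := by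
      have : HasDerivAt (fun t : ℝ => t ^ 2) (2 * t) t := by
        simpa using hasDerivAt_pow 2 t
      have := (this.const_mul (L / 2)).mul_const (‖u‖ ^ 2)
      exact this.congr_deriv (by ring)
    exact (h1.sub h2).sub h3
  have hmono : AntitoneOn ψ (Set.Icc (0:ℝ) 1) := by
    apply antitoneOn_of_deriv_nonpos (convex_Icc 0 1)
    · exact fun t _ => ((hψ' t).differentiableAt.continuousAt).continuousWithinAt
    · intro t ht
      exact ((hψ' t).differentiableAt).differentiableWithinAt
    · intro t ht
      rw [interior_Icc] at ht
      rw [(hψ' t).deriv]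
      have hcs : ⟪g (y + t • u) - g y, u⟫ ≤ ‖g (y + t • u) - g y‖ * ‖u‖ :=
        real_inner_le_norm _ _
      have hlip : ‖g (y + t • u) - g y‖ ≤ L * (t * ‖u‖) := by
        have := hLip (y + t • u) y
        simpa [norm_smul, abs_of_pos ht.1, mul_assoc] using this
      have h4 : ⟪g (y + t • u), u⟫ - ⟪g y, u⟫ ≤ L * t * ‖u‖ ^ 2 := by
        have := hcs.trans (by nlinarith [norm_nonneg u] :
          ‖g (y + t • u) - g y‖ * ‖u‖ ≤ L * t * ‖u‖ ^ 2)
        rwa [inner_sub_left] at this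
      linarith
  have := hmono (Set.mem_Icc.2 ⟨le_refl 0, zero_le_one⟩) (Set.mem_Icc.2 ⟨zero_le_one, le_refl 1⟩) zero_le_one
  simp only [hψ, zero_smul, add_zero, one_smul, zero_mul, one_mul, zero_pow, one_pow,
    mul_zero, sub_zero] at this
  have h1 : y + u = x := by simp [hu]
  rw [h1] at this
  linarith

lemma half_coco (f : E → ℝ) (g : E → E) (L : ℝ) (hL : 0 < L)
    (hconv : ConvexOn ℝ Set.univ f) (hg : ∀ z, HasGradientAt f (g z) z)
    (hLip : ∀ a b : E, ‖g a - g b‖ ≤ L * ‖a - b‖) (x y : E) :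
    ‖g x - g y‖ ^ 2 / (2 * L) ≤ f x - f y - ⟪g y, x - y⟫ := by
  set h : E → ℝ := fun z => f z - ⟪g y, z⟫ with hh
  set gh : E → E := fun z => g z - g y with hgh
  have hgradh : ∀ z, HasGradientAt h (gh z) z := by
    intro z
    have h1 : HasFDerivAt f (InnerProductSpace.toDual ℝ _ (g z)) z := (hg z).hasFDerivAt
    have h2 : HasFDerivAt (fun w : E => ⟪g y, w⟫) (InnerProductSpace.toDual ℝ _ (g y)) z := by
      exact (innerSL ℝ (g y)).hasFDerivAt (x := z)
    have h3 := h1.sub h2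
    have he : (InnerProductSpace.toDual ℝ _ (gh z))
        = InnerProductSpace.toDual ℝ _ (g z) - InnerProductSpace.toDual ℝ _ (g y) := by
      ext w
      simp [hgh, InnerProductSpace.toDual_apply_apply, inner_sub_left]
    rw [HasGradientAt, HasGradientAtFilter, he]
    exact h3
  have hconvh : ConvexOn ℝ Set.univ h := by
    refine ⟨convex_univ, fun a _ b _ s t hs ht hst => ?_⟩
    have := hconv.2 (Set.mem_univ a) (Set.mem_univ b) hs ht hst
    simp only [hh, smul_eq_mul]
    have hi : ⟪g y, s • a + t • b⟫ = s * ⟪g y, a⟫ + t * ⟪g y, b⟫ := by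
      rw [inner_add_right, real_inner_smul_right, real_inner_smul_right]
    rw [hi]
    simp only [smul_eq_mul] at this
    linarith
  have hLiph : ∀ a b : E, ‖gh a - gh b‖ ≤ L * ‖a - b‖ := by
    intro a b
    simpa [hgh, sub_sub_sub_cancel_right] using hLip a b
  have hghy : gh y = 0 := by simp [hgh]
  set w : E := x - L⁻¹ • (g x - g y) with hw
  have hmin : h y ≤ h w := by
    have := first_order h gh hconvh hgradh y w
    rw [hghy] at this
    simpa using this
  have hdes : h w ≤ h x + ⟪gh x, w - x⟫ + L / 2 * ‖w - x‖ ^ 2 :=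
    descent_lemma h gh L hL hgradh hLiph x w
  have hwx : w - x = -(L⁻¹ • (g x - g y)) := by rw [hw]; abel
  have hi1 : ⟪gh x, w - x⟫ = -(L⁻¹ * ‖g x - g y‖ ^ 2) := by
    rw [hwx, inner_neg_right, real_inner_smul_right, hgh]
    rw [real_inner_self_eq_norm_sq]
  have hn1 : ‖w - x‖ ^ 2 = L⁻¹ ^ 2 * ‖g x - g y‖ ^ 2 := by
    rw [hwx, norm_neg, norm_smul]
    simp [abs_of_pos (inv_pos.2 hL), mul_pow]
  rw [hi1, hn1] at hdes
  have heq : L / 2 * (L⁻¹ ^ 2 * ‖g x - g y‖ ^ 2) - L⁻¹ * ‖g x - g y‖ ^ 2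
      = -(‖g x - g y‖ ^ 2 / (2 * L)) := by
    field_simp
    ring
  have hx' : h x - h y = f x - f y - ⟪g y, x - y⟫ := by
    simp only [hh, inner_sub_right]
    ring
  clear_value h gh w
  have hfinal : h y ≤ h x - ‖g x - g y‖ ^ 2 / (2 * L) := by linarith
  linarith

lemma cocoercive (f : E → ℝ) (g : E → E) (L : ℝ) (hL : 0 < L)
    (hconv : ConvexOn ℝ Set.univ f) (hg : ∀ z, HasGradientAt f (g z) z)
    (hLip : ∀ a b : E, ‖g a - g b‖ ≤ L * ‖a - b‖) (x y : E) :
    ‖g x - g y‖ ^ 2 ≤ L * ⟪g x - g y, x - y⟫ := by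
  have h1 := half_coco f g L hL hconv hg hLip x y
  have h2 := half_coco f g L hL hconv hg hLip y x
  rw [norm_sub_rev (g y) (g x)] at h2
  have he : (f x - f y - ⟪g y, x - y⟫) + (f y - f x - ⟪g x, y - x⟫)
      = ⟪g x - g y, x - y⟫ := by
    have h4 : (y - x) = -(x - y) := by abel
    rw [h4, inner_neg_right, inner_sub_left]
    ring
  have hsum : ‖g x - g y‖ ^ 2 / (2 * L) + ‖g x - g y‖ ^ 2 / (2 * L)
      ≤ ⟪g x - g y, x - y⟫ := by linarith
  have hLpos : 0 < 2 * L := by linarith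
  rw [← add_div] at hsum
  have h3 := (div_le_iff₀ hLpos).1 hsum
  linarith

end Aux

lemma prod_eq_single_of_one {m : ℕ} (F : Fin m → ℝ) (j : Fin m) (hF : ∀ l, l ≠ j → F l = 1) :
    ∏ l, F l = F j :=
  Finset.prod_eq_single j (fun l _ hl => hF l hl) (by simp)

lemma prod_eq_pair {m : ℕ} (F : Fin m → ℝ) {j k : Fin m} (hjk : j ≠ k)
    (hF : ∀ l, l ≠ j → l ≠ k → F l = 1) : ∏ l, F l = F j * F k := by
  rw [← Finset.mul_prod_erase Finset.univ F (Finset.mem_univ j)]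
  have hk : k ∈ Finset.univ.erase j := by
    simp [Finset.mem_erase, Ne.symm hjk]
  rw [← Finset.mul_prod_erase _ F hk]
  rw [Finset.prod_eq_one, mul_one]
  intro l hl
  simp only [Finset.mem_erase] at hl
  exact hF l hl.2.1 hl.1

lemma exp_const {n m : ℕ} (w : Fin m → Fin n → ℝ) (hw : ∀ j, ∑ i, w j i = 1) :
    ∑ B : Fin m → Fin n, (∏ l, w l (B l)) = 1 := by
  have key := Finset.prod_univ_sum (fun _ : Fin m => (Finset.univ : Finset (Fin n)))
      (fun l i => w l i)
  rw [Fintype.piFinset_univ] at key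
  rw [← key]
  simp [hw]

lemma exp_marginal {n m : ℕ} (w : Fin m → Fin n → ℝ) (hw : ∀ j, ∑ i, w j i = 1)
    (j : Fin m) (h : Fin n → ℝ) :
    ∑ B : Fin m → Fin n, (∏ l, w l (B l)) * h (B j) = ∑ i, w j i * h i := by
  have key := Finset.prod_univ_sum (fun _ : Fin m => (Finset.univ : Finset (Fin n)))
      (fun l i => w l i * (if l = j then h i else 1))
  rw [Fintype.piFinset_univ] at key
  have step1 : ∑ B : Fin m → Fin n, (∏ l, w l (B l)) * h (B j)
      = ∑ B : Fin m → Fin n, ∏ l, (w l (B l) * (if l = j then h (B l) else 1)) := by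
    refine Finset.sum_congr rfl fun B _ => ?_
    rw [Finset.prod_mul_distrib]
    congr 1
    rw [prod_eq_single_of_one _ j (fun l hl => by simp [hl])]
    simp
  rw [step1, ← key]
  rw [prod_eq_single_of_one _ j (fun l hl => by simp [hl, ← Finset.sum_ite_eq, hw l])]
  simp

lemma exp_linear {n m : ℕ} (w : Fin m → Fin n → ℝ) (hw : ∀ j, ∑ i, w j i = 1)
    (h : Fin m → Fin n → ℝ) :
    ∑ B : Fin m → Fin n, (∏ l, w l (B l)) * (∑ j, h j (B j)) = ∑ j, ∑ i, w j i * h j i := by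
  have : ∀ B : Fin m → Fin n, (∏ l, w l (B l)) * (∑ j, h j (B j))
      = ∑ j, (∏ l, w l (B l)) * h j (B j) := fun B => Finset.mul_sum _ _ _
  rw [Finset.sum_congr rfl fun B _ => this B, Finset.sum_comm]
  exact Finset.sum_congr rfl fun j _ => exp_marginal w hw j (h j)

lemma exp_marginal_two {n m : ℕ} (w : Fin m → Fin n → ℝ) (hw : ∀ j, ∑ i, w j i = 1)
    {j k : Fin m} (hjk : j ≠ k) (h1 h2 : Fin n → ℝ) :
    ∑ B : Fin m → Fin n, (∏ l, w l (B l)) * (h1 (B j) * h2 (B k))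
      = (∑ i, w j i * h1 i) * (∑ i, w k i * h2 i) := by
  have key := Finset.prod_univ_sum (fun _ : Fin m => (Finset.univ : Finset (Fin n)))
      (fun l i => w l i * (if l = j then h1 i else if l = k then h2 i else 1))
  rw [Fintype.piFinset_univ] at key
  have step1 : ∑ B : Fin m → Fin n, (∏ l, w l (B l)) * (h1 (B j) * h2 (B k))
      = ∑ B : Fin m → Fin n,
          ∏ l, (w l (B l) * (if l = j then h1 (B l) else if l = k then h2 (B l) else 1)) := by
    refine Finset.sum_congr rfl fun B _ => ?_
    rw [Finset.prod_mul_distrib]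
    congr 1
    rw [prod_eq_pair _ hjk (fun l hlj hlk => by simp [hlj, hlk])]
    simp [hjk, Ne.symm hjk]
  rw [step1, ← key]
  rw [prod_eq_pair _ hjk (fun l hlj hlk => by simp [hlj, hlk, ← Finset.sum_ite_eq, hw l])]
  congr 1
  · exact Finset.sum_congr rfl fun i _ => by simp
  · exact Finset.sum_congr rfl fun i _ => by simp [Ne.symm hjk]

lemma exp_norm_sq_sum {d n m : ℕ} (w : Fin m → Fin n → ℝ) (hw : ∀ j, ∑ i, w j i = 1)
    (Z : Fin m → Fin n → EuclideanSpace ℝ (Fin d)) (hZ : ∀ j, ∑ i, w j i • Z j i = 0) :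
    ∑ B : Fin m → Fin n, (∏ l, w l (B l)) * ‖∑ j, Z j (B j)‖ ^ 2
      = ∑ j, ∑ i, w j i * ‖Z j i‖ ^ 2 := by
  have hcoord : ∀ (j : Fin m) (t : Fin d), ∑ i, w j i * Z j i t = 0 := by
    intro j t
    have h1 : (EuclideanSpace.proj t) (∑ i, w j i • Z j i) = (0 : ℝ) := by
      rw [hZ j]; simp
    rw [map_sum] at h1
    simpa [PiLp.proj_apply, PiLp.smul_apply, smul_eq_mul] using h1
  have hinner : ∀ B : Fin m → Fin n, ‖∑ j, Z j (B j)‖ ^ 2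
      = ∑ j, ∑ k, ⟪Z j (B j), Z k (B k)⟫ := by
    intro B
    rw [← real_inner_self_eq_norm_sq, sum_inner]
    exact Finset.sum_congr rfl fun j _ => inner_sum _ _ _
  have step1 : ∑ B : Fin m → Fin n, (∏ l, w l (B l)) * ‖∑ j, Z j (B j)‖ ^ 2
      = ∑ j, ∑ k, ∑ B : Fin m → Fin n, (∏ l, w l (B l)) * ⟪Z j (B j), Z k (B k)⟫ := by
    simp_rw [hinner, Finset.mul_sum]
    rw [Finset.sum_comm]
    refine Finset.sum_congr rfl fun j _ => Finset.sum_comm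
  rw [step1]
  have hterm : ∀ j k : Fin m, (∑ B : Fin m → Fin n, (∏ l, w l (B l)) * ⟪Z j (B j), Z k (B k)⟫)
      = if k = j then ∑ i, w j i * ‖Z j i‖ ^ 2 else 0 := by
    intro j k
    by_cases hkj : k = j
    · subst hkj
      rw [if_pos rfl]
      have := exp_marginal w hw k (fun i => ‖Z k i‖ ^ 2)
      rw [← this]
      refine Finset.sum_congr rfl fun B _ => ?_
      rw [real_inner_self_eq_norm_sq]
    · rw [if_neg hkj]
      have hIP : ∀ B : Fin m → Fin n, ⟪Z j (B j), Z k (B k)⟫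
          = ∑ t, Z j (B j) t * Z k (B k) t := by
        intro B
        simp [PiLp.inner_apply, RCLike.inner_apply, mul_comm]
      have : ∑ B : Fin m → Fin n, (∏ l, w l (B l)) * ⟪Z j (B j), Z k (B k)⟫
          = ∑ t, ∑ B : Fin m → Fin n, (∏ l, w l (B l)) * (Z j (B j) t * Z k (B k) t) := by
        simp_rw [hIP, Finset.mul_sum]
        exact Finset.sum_comm
      rw [this]
      refine Finset.sum_eq_zero fun t _ => ?_
      rw [exp_marginal_two w hw (fun h => hkj h.symm) (fun i => Z j i t) (fun i => Z k i t)]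
      rw [hcoord j t, zero_mul]
  calc ∑ j, ∑ k, ∑ B : Fin m → Fin n, (∏ l, w l (B l)) * ⟪Z j (B j), Z k (B k)⟫
      = ∑ j : Fin m, ∑ k, if k = j then ∑ i, w j i * ‖Z j i‖ ^ 2 else 0 :=
        Finset.sum_congr rfl fun j _ => Finset.sum_congr rfl fun k _ => hterm j k
    _ = ∑ j, ∑ i, w j i * ‖Z j i‖ ^ 2 := by
        refine Finset.sum_congr rfl fun j _ => ?_
        simp




noncomputable section

/-- The state of minibatch SAGA: the iterate `x` and the last gradients `α_i`. -/
structure MbState (d n : ℕ) where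
  x : EuclideanSpace ℝ (Fin d)
  alpha : Fin n → EuclideanSpace ℝ (Fin d)

namespace MbState

variable {d n : ℕ}

/-- `ᾱ = (1/n) ∑ i, α_i`. -/
def abar (S : MbState d n) : EuclideanSpace ℝ (Fin d) :=
  ((1 : ℝ) / n) • ∑ i, S.alpha i

/-- One step of minibatch SAGA with batch `B = (i_1, …, i_m)` (one index per machine). -/
def step {m : ℕ} (gradf : Fin n → EuclideanSpace ℝ (Fin d) → EuclideanSpace ℝ (Fin d))
    (η : ℝ) (S : MbState d n) (B : Fin m → Fin n) : MbState d n where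
  x := S.x - η • ((∑ j, gradf (B j) S.x) - (∑ j, S.alpha (B j)) + (m : ℝ) • S.abar)
  alpha := fun i => if ∃ j, B j = i then gradf i S.x else S.alpha i

/-- Run `k` steps of minibatch SAGA, with batches given by `ω`. -/
def run {m : ℕ} (gradf : Fin n → EuclideanSpace ℝ (Fin d) → EuclideanSpace ℝ (Fin d))
    (η : ℝ) (S0 : MbState d n) : (k : ℕ) → (Fin k → (Fin m → Fin n)) → MbState d n
  | 0, _ => S0
  | (k + 1), ω => step gradf η (run gradf η S0 k (fun t => ω t.castSucc)) (ω (Fin.last k))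

end MbState

/-- The probability of a batch `B`, when each `i_j` is drawn independently and uniformly from
`S_j = J⁻¹(j)` (each of size `n/m`): it is `(m/n)^m` if `B j ∈ S_j` for all `j`, and `0`
otherwise. -/
def mbWeight {n m : ℕ} (J : Fin n → Fin m) (B : Fin m → Fin n) : ℝ :=
  ∏ j, if J (B j) = j then (m : ℝ) / n else 0

end

set_option maxHeartbeats 1000000 in
theorem minibatch_phi1_decrease
    {d n m : ℕ} (hd : 0 < d) (hn : 0 < n) (hm : 0 < m) (hmn : m ∣ n)
    (L Lf μ : ℝ) (hL : 0 < L) (hLf : 0 < Lf) (hμ : 0 < μ)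
    (f : Fin n → EuclideanSpace ℝ (Fin d) → ℝ)
    (gradf : Fin n → EuclideanSpace ℝ (Fin d) → EuclideanSpace ℝ (Fin d))
    (hgrad : ∀ i x, HasGradientAt (f i) (gradf i x) x)
    (hconv : ∀ i, ConvexOn ℝ Set.univ (f i))
    (hsmooth : ∀ i (x y : EuclideanSpace ℝ (Fin d)), ‖gradf i x - gradf i y‖ ≤ L * ‖x - y‖)
    (hFsmooth : ∀ x y : EuclideanSpace ℝ (Fin d),
      ‖((1 : ℝ) / n) • (∑ i, gradf i x) - ((1 : ℝ) / n) • (∑ i, gradf i y)‖ ≤ Lf * ‖x - y‖)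
    (hFstrong : ∀ x y : EuclideanSpace ℝ (Fin d),
      μ * ‖x - y‖ ^ 2 ≤
        ⟪((1 : ℝ) / n) • (∑ i, gradf i x) - ((1 : ℝ) / n) • (∑ i, gradf i y), x - y⟫)
    (xstar : EuclideanSpace ℝ (Fin d))
    (hmin : ∀ x : EuclideanSpace ℝ (Fin d),
      (((1 : ℝ) / n) * ∑ i, f i xstar) ≤ ((1 : ℝ) / n) * ∑ i, f i x)
    (hstarzero : (∑ i, gradf i xstar) = 0)
    (J : Fin n → Fin m)
    (hpart : ∀ j, (Finset.univ.filter (fun i => J i = j)).card = n / m)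
    (η : ℝ) (hη : 0 < η)
    (S : MbState d n)
    :
    (∑ B : Fin m → Fin n, mbWeight J B * ‖(MbState.step gradf η S B).x - xstar‖ ^ 2)
        - ‖S.x - xstar‖ ^ 2
      ≤ -2 * (m : ℝ) * η * ⟪S.x - xstar, ((1 : ℝ) / n) • ∑ i, gradf i S.x⟫
        + η ^ 2 * (m : ℝ) ^ 2 * ‖((1 : ℝ) / n) • ∑ i, gradf i S.x‖ ^ 2
        + 2 * η ^ 2 * (m : ℝ) * L * ⟪S.x - xstar, ((1 : ℝ) / n) • ∑ i, gradf i S.x⟫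
        + (2 * η ^ 2 * (m : ℝ) / n) * (∑ i, ‖S.alpha i - gradf i xstar‖ ^ 2) := by
  classical
  have hn0 : (n:ℝ) ≠ 0 := Nat.cast_ne_zero.2 hn.ne'
  have hm0 : (m:ℝ) ≠ 0 := Nat.cast_ne_zero.2 hm.ne'
  set y : EuclideanSpace ℝ (Fin d) := S.x - xstar with hy
  set gbar : EuclideanSpace ℝ (Fin d) := ((1 : ℝ) / n) • ∑ i, gradf i S.x with hgbar
  set w : Fin m → Fin n → ℝ := fun j i => if J i = j then (m:ℝ)/n else 0 with hwdef
  have hw1 : ∀ j, ∑ i, w j i = 1 := by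
    intro j
    have h1 : ∑ i, w j i = ((Finset.univ.filter (fun i => J i = j)).card : ℝ) * ((m:ℝ)/n) := by
      simp only [hwdef]
      rw [← Finset.sum_filter]
      simp [Finset.sum_const, nsmul_eq_mul]
    rw [h1, hpart j, Nat.cast_div hmn hm0]
    field_simp
  have hwi : ∀ i, ∑ j, w j i = (m:ℝ)/n := by
    intro i
    simp [hwdef]
  set u : Fin n → EuclideanSpace ℝ (Fin d) := fun i => gradf i S.x - S.alpha i with hu
  set μv : Fin m → EuclideanSpace ℝ (Fin d) := fun j => ∑ i, w j i • u i with hμv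
  set Z : Fin m → Fin n → EuclideanSpace ℝ (Fin d) := fun j i => u i - μv j with hZdef
  have hZ0 : ∀ j, ∑ i, w j i • Z j i = 0 := by
    intro j
    simp only [hZdef, smul_sub]
    rw [Finset.sum_sub_distrib, ← Finset.sum_smul, hw1 j, one_smul]
    simp [hμv]
  -- rewrite the step
  have hvB : ∀ B : Fin m → Fin n,
      (∑ j, gradf (B j) S.x) - (∑ j, S.alpha (B j)) + (m:ℝ) • S.abar
        = (m:ℝ) • gbar + ∑ j, Z j (B j) := by
    intro B
    have hsum_mu : ∑ j, μv j = ((m:ℝ)/n) • (∑ i, u i) := by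
      simp only [hμv]
      rw [Finset.sum_comm, Finset.smul_sum]
      refine Finset.sum_congr rfl fun i _ => ?_
      rw [← Finset.sum_smul, hwi i]
    have e1 : (m:ℝ) • gbar = ((m:ℝ)/n) • ∑ i, gradf i S.x := by
      rw [hgbar, smul_smul]
      congr 1
      field_simp
    have e2 : (m:ℝ) • S.abar = ((m:ℝ)/n) • ∑ i, S.alpha i := by
      rw [MbState.abar, smul_smul]
      congr 1
      field_simp
    have e3 : ∑ i, u i = (∑ i, gradf i S.x) - ∑ i, S.alpha i := by
      simp only [hu]
      rw [Finset.sum_sub_distrib]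
    have e4 : ∑ j, Z j (B j) = (∑ j, gradf (B j) S.x) - (∑ j, S.alpha (B j)) - ∑ j, μv j := by
      simp only [hZdef, hu]
      rw [Finset.sum_sub_distrib, Finset.sum_sub_distrib]
    rw [e4, hsum_mu, e1, e2, e3, smul_sub]
    abel
  have hv : ∀ B : Fin m → Fin n,
      (MbState.step gradf η S B).x - xstar = y - η • ((m:ℝ) • gbar + ∑ j, Z j (B j)) := by
    intro B
    have : (MbState.step gradf η S B).x
        = S.x - η • ((∑ j, gradf (B j) S.x) - (∑ j, S.alpha (B j)) + (m:ℝ) • S.abar) := rfl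
    rw [this, hvB B, hy, sub_right_comm]

  set V : ℝ := ∑ j, ∑ i, w j i * ‖Z j i‖ ^ 2 with hV
  have hZi : ∀ (v : EuclideanSpace ℝ (Fin d)) (j : Fin m), ∑ i, w j i * ⟪v, Z j i⟫ = 0 := by
    intro v j
    have h1 : ∑ i, w j i * ⟪v, Z j i⟫ = ⟪v, ∑ i, w j i • Z j i⟫ := by
      rw [inner_sum]
      exact Finset.sum_congr rfl fun i _ => (real_inner_smul_right v _ _).symm
    rw [h1, hZ0 j, inner_zero_right]
  set c : EuclideanSpace ℝ (Fin d) := (m:ℝ) • gbar with hc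
  have hpoint : ∀ B : Fin m → Fin n,
      ‖(MbState.step gradf η S B).x - xstar‖ ^ 2
        = (‖y‖ ^ 2 - 2*η*⟪y, c⟫ + η^2*‖c‖^2)
          + (∑ j, (-(2*η)*⟪y, Z j (B j)⟫ + (2*η^2)*⟪c, Z j (B j)⟫))
          + η^2 * ‖∑ j, Z j (B j)‖ ^ 2 := by
    intro B
    rw [hv B]
    rw [norm_sub_sq_real]
    have e0 : ‖η • (c + ∑ j, Z j (B j))‖ ^ 2 = η^2 * ‖c + ∑ j, Z j (B j)‖ ^ 2 := by
      rw [norm_smul, mul_pow, Real.norm_eq_abs, sq_abs]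
    have e1 : ⟪y, η • (c + ∑ j, Z j (B j))⟫
        = η * (⟪y, c⟫ + ∑ j, ⟪y, Z j (B j)⟫) := by
      rw [real_inner_smul_right, inner_add_right, inner_sum]
    have e2 : ‖c + ∑ j, Z j (B j)‖ ^ 2
        = ‖c‖^2 + 2 * (∑ j, ⟪c, Z j (B j)⟫) + ‖∑ j, Z j (B j)‖^2 := by
      rw [norm_add_sq_real, inner_sum]
    have e3 : ∑ j, (-(2*η)*⟪y, Z j (B j)⟫ + (2*η^2)*⟪c, Z j (B j)⟫)
        = -(2*η) * (∑ j, ⟪y, Z j (B j)⟫) + (2*η^2) * (∑ j, ⟪c, Z j (B j)⟫) := by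
      rw [Finset.sum_add_distrib, ← Finset.mul_sum, ← Finset.mul_sum]
    rw [e0, e1, e2, e3]
    ring
  have hPw : ∀ B : Fin m → Fin n, mbWeight J B = ∏ l, w l (B l) := fun B => rfl
  have hexp : (∑ B : Fin m → Fin n, mbWeight J B * ‖(MbState.step gradf η S B).x - xstar‖ ^ 2)
      = (‖y‖ ^ 2 - 2*η*⟪y, c⟫ + η^2*‖c‖^2) + η^2 * V := by
    have expand : ∀ B : Fin m → Fin n,
        mbWeight J B * ‖(MbState.step gradf η S B).x - xstar‖ ^ 2
        = (∏ l, w l (B l)) * (‖y‖ ^ 2 - 2*η*⟪y, c⟫ + η^2*‖c‖^2)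
          + (∏ l, w l (B l)) * (∑ j, (-(2*η)*⟪y, Z j (B j)⟫ + (2*η^2)*⟪c, Z j (B j)⟫))
          + η^2 * ((∏ l, w l (B l)) * ‖∑ j, Z j (B j)‖ ^ 2) := by
      intro B
      rw [hPw B, hpoint B]
      ring
    rw [Finset.sum_congr rfl fun B _ => expand B]
    rw [Finset.sum_add_distrib, Finset.sum_add_distrib]
    rw [← Finset.sum_mul, exp_const w hw1, one_mul]
    rw [exp_linear w hw1 (fun j i => -(2*η)*⟪y, Z j i⟫ + (2*η^2)*⟪c, Z j i⟫)]
    rw [← Finset.mul_sum, exp_norm_sq_sum w hw1 Z hZ0]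
    have hzero : ∑ j, ∑ i, w j i * (-(2*η)*⟪y, Z j i⟫ + (2*η^2)*⟪c, Z j i⟫) = 0 := by
      refine Finset.sum_eq_zero fun j _ => ?_
      have h5 : ∀ i, w j i * (-(2*η)*⟪y, Z j i⟫ + (2*η^2)*⟪c, Z j i⟫)
          = (-(2*η)) * (w j i * ⟪y, Z j i⟫) + (2*η^2) * (w j i * ⟪c, Z j i⟫) := fun i => by ring
      rw [Finset.sum_congr rfl fun i _ => h5 i, Finset.sum_add_distrib,
        ← Finset.mul_sum, ← Finset.mul_sum, hZi y j, hZi c j]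
      ring
    rw [hzero]
    ring

  -- variance bound
  have hVar : ∀ j, ∑ i, w j i * ‖Z j i‖ ^ 2 ≤ ∑ i, w j i * ‖u i‖ ^ 2 := by
    intro j
    have hexp2 : ∀ i, w j i * ‖Z j i‖ ^ 2
        = w j i * ‖u i‖ ^ 2 - 2 * (w j i * ⟪u i, μv j⟫) + w j i * ‖μv j‖ ^ 2 := by
      intro i
      have : ‖Z j i‖ ^ 2 = ‖u i‖ ^ 2 - 2 * ⟪u i, μv j⟫ + ‖μv j‖ ^ 2 := by
        simp only [hZdef]
        rw [norm_sub_sq_real]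
      rw [this]; ring
    have hμinner : ∑ i, w j i * ⟪u i, μv j⟫ = ‖μv j‖ ^ 2 := by
      have h1 : (⟪μv j, μv j⟫ : ℝ) = ∑ i, w j i * ⟪u i, μv j⟫ := by
        calc (⟪μv j, μv j⟫ : ℝ) = ⟪∑ i, w j i • u i, μv j⟫ := rfl
          _ = ∑ i, ⟪w j i • u i, μv j⟫ := sum_inner _ _ _
          _ = ∑ i, w j i * ⟪u i, μv j⟫ :=
              Finset.sum_congr rfl fun i _ => real_inner_smul_left _ _ _
      rw [← h1, real_inner_self_eq_norm_sq]
    have hsum : ∑ i, w j i * ‖Z j i‖ ^ 2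
        = ∑ i, w j i * ‖u i‖ ^ 2 - 2 * ‖μv j‖ ^ 2 + ‖μv j‖ ^ 2 := by
      rw [Finset.sum_congr rfl fun i _ => hexp2 i]
      rw [Finset.sum_add_distrib, Finset.sum_sub_distrib, ← Finset.mul_sum, hμinner,
        ← Finset.sum_mul, hw1 j, one_mul]
    rw [hsum]
    nlinarith [sq_nonneg (‖μv j‖)]
  have hVu : V ≤ ((m:ℝ)/n) * ∑ i, ‖u i‖ ^ 2 := by
    have h1 : V ≤ ∑ j, ∑ i, w j i * ‖u i‖ ^ 2 := by
      rw [hV]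
      exact Finset.sum_le_sum fun j _ => hVar j
    have h2 : ∑ j, ∑ i, w j i * ‖u i‖ ^ 2 = ((m:ℝ)/n) * ∑ i, ‖u i‖ ^ 2 := by
      rw [Finset.sum_comm, Finset.mul_sum]
      refine Finset.sum_congr rfl fun i _ => ?_
      rw [← Finset.sum_mul, hwi i]
    linarith
  -- bound on ∑ ‖u i‖²
  have hui : ∀ i, ‖u i‖ ^ 2 ≤ 2 * ‖gradf i S.x - gradf i xstar‖ ^ 2
      + 2 * ‖S.alpha i - gradf i xstar‖ ^ 2 := by
    intro i
    have hrepr : u i = (gradf i S.x - gradf i xstar) - (S.alpha i - gradf i xstar) := by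
      simp only [hu]
      abel
    rw [hrepr, norm_sub_sq_real]
    have habs := abs_real_inner_le_norm (gradf i S.x - gradf i xstar) (S.alpha i - gradf i xstar)
    have h1 := abs_le.1 habs
    linarith [h1.1, sq_nonneg (‖gradf i S.x - gradf i xstar‖ - ‖S.alpha i - gradf i xstar‖)]
  have hcoco : ∀ i, ‖gradf i S.x - gradf i xstar‖ ^ 2
      ≤ L * ⟪gradf i S.x - gradf i xstar, y⟫ := by
    intro i
    have := cocoercive (f i) (fun z => gradf i z) L hL (hconv i) (fun z => hgrad i z)
      (fun a b => hsmooth i a b) S.x xstar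
    rw [hy]
    exact this
  have hsumg : ∑ i, ⟪gradf i S.x - gradf i xstar, y⟫ = (n:ℝ) * ⟪y, gbar⟫ := by
    have h1 : ∑ i, ⟪gradf i S.x - gradf i xstar, y⟫
        = ⟪(∑ i, gradf i S.x) - ∑ i, gradf i xstar, y⟫ := by
      rw [← Finset.sum_sub_distrib, sum_inner]
    rw [h1, hstarzero, sub_zero]
    have h2 : ⟪y, gbar⟫ = ((1:ℝ)/n) * ⟪∑ i, gradf i S.x, y⟫ := by
      rw [hgbar, real_inner_smul_right, real_inner_comm]
    rw [h2]
    field_simp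
  have hgsum : ∑ i, ‖gradf i S.x - gradf i xstar‖ ^ 2 ≤ L * ((n:ℝ) * ⟪y, gbar⟫) := by
    calc ∑ i, ‖gradf i S.x - gradf i xstar‖ ^ 2
        ≤ ∑ i, L * ⟪gradf i S.x - gradf i xstar, y⟫ := Finset.sum_le_sum fun i _ => hcoco i
      _ = L * ((n:ℝ) * ⟪y, gbar⟫) := by rw [← Finset.mul_sum, hsumg]
  have husum : ∑ i, ‖u i‖ ^ 2
      ≤ 2 * (L * ((n:ℝ) * ⟪y, gbar⟫)) + 2 * ∑ i, ‖S.alpha i - gradf i xstar‖ ^ 2 := by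
    calc ∑ i, ‖u i‖ ^ 2
        ≤ ∑ i, (2 * ‖gradf i S.x - gradf i xstar‖ ^ 2
            + 2 * ‖S.alpha i - gradf i xstar‖ ^ 2) := Finset.sum_le_sum fun i _ => hui i
      _ = 2 * ∑ i, ‖gradf i S.x - gradf i xstar‖ ^ 2
            + 2 * ∑ i, ‖S.alpha i - gradf i xstar‖ ^ 2 := by
          rw [Finset.sum_add_distrib, ← Finset.mul_sum, ← Finset.mul_sum]
      _ ≤ 2 * (L * ((n:ℝ) * ⟪y, gbar⟫)) + 2 * ∑ i, ‖S.alpha i - gradf i xstar‖ ^ 2 := by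
          linarith
  have hmn_pos : 0 < (m:ℝ)/n := by positivity
  have hVfinal : V ≤ 2 * (m:ℝ) * L * ⟪y, gbar⟫
      + (2 * (m:ℝ) / n) * ∑ i, ‖S.alpha i - gradf i xstar‖ ^ 2 := by
    have h1 : V ≤ ((m:ℝ)/n) * (2 * (L * ((n:ℝ) * ⟪y, gbar⟫))
        + 2 * ∑ i, ‖S.alpha i - gradf i xstar‖ ^ 2) :=
      hVu.trans (mul_le_mul_of_nonneg_left husum hmn_pos.le)
    have h2 : ((m:ℝ)/n) * (2 * (L * ((n:ℝ) * ⟪y, gbar⟫))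
        + 2 * ∑ i, ‖S.alpha i - gradf i xstar‖ ^ 2)
        = 2 * (m:ℝ) * L * ⟪y, gbar⟫
          + (2 * (m:ℝ) / n) * ∑ i, ‖S.alpha i - gradf i xstar‖ ^ 2 := by
      field_simp
    linarith
  -- final assembly
  have hyc : ⟪y, c⟫ = (m:ℝ) * ⟪y, gbar⟫ := by rw [hc, real_inner_smul_right]
  have hcn : ‖c‖ ^ 2 = (m:ℝ)^2 * ‖gbar‖ ^ 2 := by
    rw [hc, norm_smul, mul_pow, Real.norm_eq_abs, sq_abs]
  rw [hexp, hyc, hcn]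
  have hη2 : (0:ℝ) ≤ η^2 := sq_nonneg η
  have hVmul : η^2 * V ≤ η^2 * (2 * (m:ℝ) * L * ⟪y, gbar⟫
      + (2 * (m:ℝ) / n) * ∑ i, ‖S.alpha i - gradf i xstar‖ ^ 2) :=
    mul_le_mul_of_nonneg_left hVfinal hη2
  have hfold : ⟪S.x - xstar, ((1 : ℝ) / n) • ∑ i, gradf i S.x⟫ = ⟪y, gbar⟫ := by rw [← hy, ← hgbar]
  rw [hfold]
  have hfold2 : ‖((1 : ℝ) / n) • ∑ i, gradf i S.x‖ = ‖gbar‖ := by rw [← hgbar]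
  rw [hfold2]
  have hVmul2 : η ^ 2 * V ≤ 2 * η ^ 2 * (m:ℝ) * L * ⟪y, gbar⟫
      + 2 * η ^ 2 * (m:ℝ) / n * (∑ i, ‖S.alpha i - gradf i xstar‖ ^ 2) := by
    have h2 : η ^ 2 * (2 * (m:ℝ) * L * ⟪y, gbar⟫
        + 2 * (m:ℝ) / n * (∑ i, ‖S.alpha i - gradf i xstar‖ ^ 2))
        = 2 * η ^ 2 * (m:ℝ) * L * ⟪y, gbar⟫
          + 2 * η ^ 2 * (m:ℝ) / n * (∑ i, ‖S.alpha i - gradf i xstar‖ ^ 2) := by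
      ring
    linarith [hVmul, h2]
  linarith [hVmul2]
end

section
/- Set η = 1/(2·m·L_f + 6·L). Then for any minibatch-SAGA state, E_B[φ⁺] ≤ (1 − γ)·φ, where γ = min( μ·m/(4·m·L_f + 12·L), m/(3n) ) and φ⁺ denotes the value of φ at the state produced by one step with batch B. -/
open Finset
open scoped RealInnerProductSpace BigOperators

section AuxAnalysis

variable {E : Type*} [NormedAddCommGroup E] [InnerProductSpace ℝ E] [CompleteSpace E]

lemma aux_line_deriv (f : E → ℝ) (G : E → E) (hg : ∀ z, HasGradientAt f (G z) z)
    (x u : E) (t : ℝ) :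
    HasDerivAt (fun s : ℝ => f (x + s • u)) ⟪G (x + t • u), u⟫ t := by
  have hline : HasDerivAt (fun s : ℝ => x + s • u) u t := by
    simpa using ((hasDerivAt_id t).smul_const u).const_add x
  have h := (hasGradientAt_iff_hasFDerivAt.1 (hg (x + t • u))).comp_hasDerivAt t hline
  simpa [InnerProductSpace.toDual_apply_apply, Function.comp_def] using h

lemma aux_descent (f : E → ℝ) (G : E → E) (hg : ∀ z, HasGradientAt f (G z) z)
    (K : ℝ) (hK : 0 ≤ K) (hlip : ∀ a b, ‖G a - G b‖ ≤ K * ‖a - b‖) (x y : E) :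
    f y ≤ f x + ⟪G x, y - x⟫ + K / 2 * ‖y - x‖ ^ 2 := by
  set u := y - x with hu
  set c1 : ℝ := ⟪G x, u⟫ with hc1
  set c2 : ℝ := K * ‖u‖ ^ 2 / 2 with hc2
  set r : ℝ → ℝ := fun t => f (x + t • u) - t * c1 - c2 * t ^ 2 with hr
  have hderiv : ∀ t : ℝ, HasDerivAt r (⟪G (x + t • u), u⟫ - c1 - c2 * (2 * t)) t := by
    intro t
    have h := ((aux_line_deriv f G hg x u t).sub ((hasDerivAt_id t).mul_const c1)).sub
      ((hasDerivAt_pow 2 t).const_mul c2)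
    simpa [hr, Pi.sub_def] using h
  have hdiff : Differentiable ℝ r := fun t => (hderiv t).differentiableAt
  have hanti : AntitoneOn r (Set.Icc 0 1) := by
    apply antitoneOn_of_deriv_nonpos (convex_Icc 0 1) hdiff.continuous.continuousOn
      hdiff.differentiableOn
    intro t ht
    rw [interior_Icc] at ht
    rw [(hderiv t).deriv]
    have h1 : ⟪G (x + t • u), u⟫ - c1 = ⟪G (x + t • u) - G x, u⟫ := by
      rw [inner_sub_left, hc1]
    have h2 : ⟪G (x + t • u) - G x, u⟫ ≤ K * t * ‖u‖ ^ 2 := by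
      have := real_inner_le_norm (G (x + t • u) - G x) u
      have hl := hlip (x + t • u) x
      have hnn : ‖x + t • u - x‖ = t * ‖u‖ := by
        rw [add_sub_cancel_left, norm_smul, Real.norm_eq_abs, abs_of_pos ht.1]
      rw [hnn] at hl
      nlinarith [norm_nonneg u, norm_nonneg (G (x + t • u) - G x)]
    rw [h1]
    rw [hc2]
    nlinarith [h2]
  have hle := hanti (Set.mem_Icc.2 ⟨le_refl 0, zero_le_one⟩)
    (Set.mem_Icc.2 ⟨zero_le_one, le_refl 1⟩) zero_le_one
  simp only [hr, one_smul, zero_smul, add_zero, one_pow] at hle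
  have hxy : x + u = y := by rw [hu]; abel
  rw [hxy] at hle
  rw [hc2] at hle
  rw [hc1] at hle
  linarith

lemma aux_convex_lower (f : E → ℝ) (G : E → E) (hg : ∀ z, HasGradientAt f (G z) z)
    (hc : ConvexOn ℝ Set.univ f) (x y : E) :
    f x + ⟪G x, y - x⟫ ≤ f y := by
  set u := y - x with hu
  have hq : HasDerivAt (fun s : ℝ => f (x + s • u)) ⟪G x, u⟫ 0 := by
    have := aux_line_deriv f G hg x u 0
    simpa using this
  have hslope : Filter.Tendsto (slope (fun s : ℝ => f (x + s • u)) 0) (nhdsWithin 0 (Set.Ioi 0))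
      (nhds ⟪G x, u⟫) :=
    (hasDerivAt_iff_tendsto_slope.1 hq).mono_left
      (nhdsWithin_mono 0 (fun z hz => ne_of_gt hz))
  have hbound : ∀ᶠ t in nhdsWithin (0:ℝ) (Set.Ioi 0),
      slope (fun s : ℝ => f (x + s • u)) 0 t ≤ f y - f x := by
    filter_upwards [Ioc_mem_nhdsGT_of_mem (Set.left_mem_Ico.2 one_pos)] with t ht
    have hconvpt : x + t • u = (1 - t) • x + t • y := by
      rw [hu]; rw [smul_sub]; module
    have hcv := hc.2 (Set.mem_univ x) (Set.mem_univ y) (by linarith [ht.2] : (0:ℝ) ≤ 1 - t)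
      ht.1.le (by ring)
    rw [← hconvpt] at hcv
    rw [slope_def_field]
    simp only [zero_smul, add_zero, sub_zero]
    rw [div_le_iff₀ ht.1]
    simp only [smul_eq_mul] at hcv
    nlinarith [hcv]
  have := le_of_tendsto hslope hbound
  have hfy : ⟪G x, u⟫ ≤ f y - f x := this
  rw [hu] at *
  linarith

lemma aux_bregman (f : E → ℝ) (G : E → E) (hg : ∀ z, HasGradientAt f (G z) z)
    (hc : ConvexOn ℝ Set.univ f)
    (K : ℝ) (hK : 0 < K) (hlip : ∀ a b, ‖G a - G b‖ ≤ K * ‖a - b‖) (x y : E) :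
    ‖G x - G y‖ ^ 2 ≤ 2 * K * (f x - f y - ⟪G y, x - y⟫) := by
  set φ : E → ℝ := fun z => f z - ⟪G y, z⟫ with hφ
  set Gφ : E → E := fun z => G z - G y with hGφ
  have hgφ : ∀ z, HasGradientAt φ (Gφ z) z := by
    intro z
    have h1 := hasGradientAt_iff_hasFDerivAt.1 (hg z)
    have h2 : HasFDerivAt (fun w : E => ⟪G y, w⟫) (InnerProductSpace.toDual ℝ E (G y)) z := by
      have := (InnerProductSpace.toDual ℝ E (G y)).hasFDerivAt (x := z)
      exact this.congr_of_eventuallyEq (Filter.Eventually.of_forall fun w => by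
        simp [InnerProductSpace.toDual_apply_apply])
    rw [hasGradientAt_iff_hasFDerivAt, hGφ]
    rw [map_sub]
    exact h1.sub h2
  have hlipφ : ∀ a b, ‖Gφ a - Gφ b‖ ≤ K * ‖a - b‖ := by
    intro a b
    simp only [hGφ, sub_sub_sub_cancel_right]
    exact hlip a b
  set d : E := G x - G y with hd
  set z : E := x - K⁻¹ • d with hz
  have h1 : φ z ≤ φ x + ⟪Gφ x, z - x⟫ + K / 2 * ‖z - x‖ ^ 2 :=
    aux_descent φ Gφ hgφ K hK.le hlipφ x z
  have h2 : f y + ⟪G y, z - y⟫ ≤ f z := aux_convex_lower f G hg hc y z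
  have hzx : z - x = -(K⁻¹ • d) := by rw [hz]; abel
  have hin : ⟪Gφ x, z - x⟫ = -(K⁻¹ * ‖d‖ ^ 2) := by
    rw [hzx]
    show ⟪G x - G y, -(K⁻¹ • d)⟫ = _
    rw [← hd, inner_neg_right, real_inner_smul_right, real_inner_self_eq_norm_sq]
  have hnz : ‖z - x‖ ^ 2 = K⁻¹ ^ 2 * ‖d‖ ^ 2 := by
    rw [hzx, norm_neg, norm_smul, Real.norm_eq_abs, abs_of_pos (inv_pos.2 hK), mul_pow]
  rw [hin, hnz] at h1
  have h2' : f y + (⟪G y, z⟫ - ⟪G y, y⟫) ≤ f z := by rw [← inner_sub_right]; exact h2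
  have h1' : f z - ⟪G y, z⟫ ≤ (f x - ⟪G y, x⟫) + -(K⁻¹ * ‖d‖ ^ 2) + K / 2 * (K⁻¹ ^ 2 * ‖d‖ ^ 2) := h1
  have hxy : ⟪G y, x - y⟫ = ⟪G y, x⟫ - ⟪G y, y⟫ := inner_sub_right _ _ _
  have hKi : K * K⁻¹ = 1 := mul_inv_cancel₀ hK.ne'
  have hsimp : K / 2 * (K⁻¹ ^ 2 * ‖d‖ ^ 2) = K⁻¹ * ‖d‖ ^ 2 / 2 := by
    field_simp
  rw [hsimp] at h1'
  have hmain : K⁻¹ * ‖d‖ ^ 2 / 2 ≤ f x - f y - ⟪G y, x - y⟫ := by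
    rw [hxy]; linarith
  have h2K : (0:ℝ) ≤ 2 * K := by positivity
  calc ‖d‖ ^ 2 = 2 * K * (K⁻¹ * ‖d‖ ^ 2 / 2) := by field_simp
    _ ≤ 2 * K * (f x - f y - ⟪G y, x - y⟫) := mul_le_mul_of_nonneg_left hmain h2K

lemma aux_coco (f : E → ℝ) (G : E → E) (hg : ∀ z, HasGradientAt f (G z) z)
    (hc : ConvexOn ℝ Set.univ f)
    (K : ℝ) (hK : 0 < K) (hlip : ∀ a b, ‖G a - G b‖ ≤ K * ‖a - b‖) (x y : E) :
    ‖G x - G y‖ ^ 2 ≤ K * ⟪G x - G y, x - y⟫ := by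
  have b1 := aux_bregman f G hg hc K hK hlip x y
  have b2 := aux_bregman f G hg hc K hK hlip y x
  have hrev : ‖G y - G x‖ = ‖G x - G y‖ := norm_sub_rev _ _
  rw [hrev] at b2
  have e1 : ⟪G x, y - x⟫ = -⟪G x, x - y⟫ := by rw [← inner_neg_right]; congr 1; abel
  rw [e1] at b2
  have e2 : ⟪G x - G y, x - y⟫ = ⟪G x, x - y⟫ - ⟪G y, x - y⟫ := inner_sub_left _ _ _
  nlinarith [b1, b2]

lemma aux_strong (f : E → ℝ) (G : E → E) (hg : ∀ z, HasGradientAt f (G z) z)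
    (μ : ℝ) (hmono : ∀ a b : E, μ * ‖a - b‖ ^ 2 ≤ ⟪G a - G b, a - b⟫) (x xs : E) :
    f x - f xs + μ / 2 * ‖x - xs‖ ^ 2 ≤ ⟪G x, x - xs⟫ := by
  set u : E := x - xs with hu
  set c1 : ℝ := ⟪G x, u⟫ with hc1
  set M : ℝ := μ * ‖u‖ ^ 2 with hM
  set r : ℝ → ℝ := fun t => f (xs + t • u) - t * c1 - M * (t ^ 2 / 2 - t) with hr
  have hderiv : ∀ t : ℝ, HasDerivAt r (⟪G (xs + t • u), u⟫ - c1 - M * (t - 1)) t := by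
    intro t
    have hp : HasDerivAt (fun s : ℝ => M * (s ^ 2 / 2 - s)) (M * (t - 1)) t := by
      have h1 : HasDerivAt (fun s : ℝ => s ^ 2 / 2 - s) ((2 * t ^ 1) / 2 - 1) t :=
        ((hasDerivAt_pow 2 t).div_const 2).sub (hasDerivAt_id t)
      have := h1.const_mul M
      rw [show M * (t - 1) = M * (2 * t ^ 1 / 2 - 1) by ring]
      exact this
    have h := ((aux_line_deriv f G hg xs u t).sub ((hasDerivAt_id t).mul_const c1)).sub hp
    simpa [hr, Pi.sub_def] using h
  have hdiff : Differentiable ℝ r := fun t => (hderiv t).differentiableAt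
  have hanti : AntitoneOn r (Set.Icc 0 1) := by
    apply antitoneOn_of_deriv_nonpos (convex_Icc 0 1) hdiff.continuous.continuousOn
      hdiff.differentiableOn
    intro t ht
    rw [interior_Icc] at ht
    rw [(hderiv t).deriv]
    have hxpt : x - (xs + t • u) = (1 - t) • u := by
      rw [hu]; rw [sub_smul, one_smul]; abel
    have hm := hmono x (xs + t • u)
    rw [hxpt] at hm
    have hnorm : ‖(1 - t) • u‖ ^ 2 = (1 - t) ^ 2 * ‖u‖ ^ 2 := by
      rw [norm_smul, Real.norm_eq_abs, abs_of_pos (by linarith [ht.2] : (0:ℝ) < 1 - t), mul_pow]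
    rw [hnorm, real_inner_smul_right] at hm
    -- hm : μ * ((1-t)^2 * ‖u‖^2) ≤ (1-t) * ⟪G x - G (xs+t•u), u⟫
    have hgt : M * (1 - t) ≤ ⟪G x - G (xs + t • u), u⟫ := by
      have h1t : (0:ℝ) < 1 - t := by linarith [ht.2]
      rw [hM]
      nlinarith [hm]
    have hsplit : ⟪G (xs + t • u), u⟫ - c1 = -⟪G x - G (xs + t • u), u⟫ := by
      rw [hc1, inner_sub_left]; ring
    rw [hsplit]
    nlinarith [hgt]
  have hle := hanti (Set.mem_Icc.2 ⟨le_refl 0, zero_le_one⟩)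
    (Set.mem_Icc.2 ⟨zero_le_one, le_refl 1⟩) zero_le_one
  simp only [hr, one_smul, zero_smul, add_zero, one_pow] at hle
  have hx1 : xs + u = x := by rw [hu]; abel
  rw [hx1] at hle
  rw [hM, hc1, hu] at hle
  nlinarith [hle]


end AuxAnalysis


section Comb
variable {n m : ℕ}

lemma aux_Esingle (w : Fin m → Fin n → ℝ) (hw : ∀ j, ∑ i, w j i = 1)
    (j₀ : Fin m) (t : Fin n → ℝ) :
    ∑ B : Fin m → Fin n, (∏ j, w j (B j)) * t (B j₀) = ∑ i, w j₀ i * t i := by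
  have key : ∀ B : Fin m → Fin n,
      (∏ j, w j (B j)) * t (B j₀) = ∏ j, (w j (B j) * if j = j₀ then t (B j) else 1) := by
    intro B
    rw [Finset.prod_mul_distrib]
    congr 1
    simp
  simp_rw [key]
  rw [(Fintype.prod_sum (fun (j : Fin m) (i : Fin n) => w j i * if j = j₀ then t i else 1)).symm.trans rfl]
  rw [Fintype.prod_eq_single j₀]
  · simp
  · intro j hj
    simp only [if_neg hj, mul_one]
    exact hw j

lemma aux_Epair (w : Fin m → Fin n → ℝ) (hw : ∀ j, ∑ i, w j i = 1)
    (j₀ j₁ : Fin m) (hne : j₀ ≠ j₁) (t s : Fin n → ℝ) :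
    ∑ B : Fin m → Fin n, (∏ j, w j (B j)) * (t (B j₀) * s (B j₁))
      = (∑ i, w j₀ i * t i) * (∑ i, w j₁ i * s i) := by
  have key : ∀ B : Fin m → Fin n,
      (∏ j, w j (B j)) * (t (B j₀) * s (B j₁))
        = ∏ j, (w j (B j) * ((if j = j₀ then t (B j) else 1) * (if j = j₁ then s (B j) else 1))) := by
    intro B
    rw [Finset.prod_mul_distrib, Finset.prod_mul_distrib]
    congr 1
    congr 1 <;> simp
  simp_rw [key]
  rw [(Fintype.prod_sum (fun (j : Fin m) (i : Fin n) => w j i * ((if j = j₀ then t i else 1) * (if j = j₁ then s i else 1)))).symm.trans rfl]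
  have hval : ∀ j : Fin m, (∑ i, w j i * ((if j = j₀ then t i else 1) * (if j = j₁ then s i else 1)))
      = if j = j₀ then (∑ i, w j₀ i * t i) else if j = j₁ then (∑ i, w j₁ i * s i) else 1 := by
    intro j
    by_cases h0 : j = j₀
    · subst h0
      simp [hne]
    · by_cases h1 : j = j₁
      · subst h1
        simp [h0]
      · simp only [if_neg h0, if_neg h1, mul_one, one_mul]
        exact hw j
  rw [Finset.prod_congr rfl (fun j _ => hval j)]
  rw [← Finset.mul_prod_erase Finset.univ _ (Finset.mem_univ j₀), if_pos rfl]
  congr 1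
  have hj₁ : j₁ ∈ Finset.univ.erase j₀ := Finset.mem_erase.2 ⟨Ne.symm hne, Finset.mem_univ j₁⟩
  rw [← Finset.mul_prod_erase _ _ hj₁]
  rw [if_neg (Finset.mem_erase.1 hj₁).1, if_pos rfl]
  have : ∀ j ∈ (Finset.univ.erase j₀).erase j₁, (if j = j₀ then (∑ i, w j₀ i * t i) else if j = j₁ then (∑ i, w j₁ i * s i) else 1) = 1 := by
    intro j hj
    rw [if_neg (Finset.mem_erase.1 (Finset.mem_erase.1 hj).2).1, if_neg (Finset.mem_erase.1 hj).1]
  rw [Finset.prod_congr rfl this, Finset.prod_const_one, mul_one]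

lemma aux_Epair2 (w : Fin m → Fin n → ℝ) (hw : ∀ j, ∑ i, w j i = 1)
    (j₀ j₁ : Fin m) (hne : j₀ ≠ j₁) (T : Fin n → Fin n → ℝ) :
    ∑ B : Fin m → Fin n, (∏ j, w j (B j)) * T (B j₀) (B j₁)
      = ∑ i, ∑ i', w j₀ i * w j₁ i' * T i i' := by
  have key : ∀ B : Fin m → Fin n, T (B j₀) (B j₁)
      = ∑ i, ∑ i', (if B j₀ = i then (1:ℝ) else 0) * (if B j₁ = i' then (1:ℝ) else 0) * T i i' := by
    intro B
    rw [Finset.sum_eq_single (B j₀)]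
    · rw [Finset.sum_eq_single (B j₁)]
      · simp
      · intro i' _ hi'
        rw [if_neg (show ¬ (B j₁ = i') from fun h => hi' h.symm)]
        ring
      · intro h; exact absurd (Finset.mem_univ _) h
    · intro i _ hi
      rw [Finset.sum_eq_zero]
      intro i' _
      rw [if_neg (fun h => hi h.symm)]
      ring
    · intro h; exact absurd (Finset.mem_univ _) h
  calc ∑ B : Fin m → Fin n, (∏ j, w j (B j)) * T (B j₀) (B j₁)
      = ∑ B : Fin m → Fin n, ∑ i, ∑ i', (∏ j, w j (B j)) *
          (((if B j₀ = i then (1:ℝ) else 0)) * ((if B j₁ = i' then (1:ℝ) else 0))) * T i i' := by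
        apply Finset.sum_congr rfl
        intro B _
        rw [key B]
        rw [Finset.mul_sum]
        apply Finset.sum_congr rfl
        intro i _
        rw [Finset.mul_sum]
        apply Finset.sum_congr rfl
        intro i' _
        ring
    _ = ∑ i, ∑ i', (∑ B : Fin m → Fin n, (∏ j, w j (B j)) *
          (((if B j₀ = i then (1:ℝ) else 0)) * ((if B j₁ = i' then (1:ℝ) else 0)))) * T i i' := by
        rw [Finset.sum_comm]
        apply Finset.sum_congr rfl
        intro i _
        rw [Finset.sum_comm]
        apply Finset.sum_congr rfl
        intro i' _
        rw [Finset.sum_mul]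
    _ = ∑ i, ∑ i', w j₀ i * w j₁ i' * T i i' := by
        apply Finset.sum_congr rfl
        intro i _
        apply Finset.sum_congr rfl
        intro i' _
        congr 1
        rw [aux_Epair w hw j₀ j₁ hne (fun p => if p = i then 1 else 0) (fun p => if p = i' then 1 else 0)]
        simp
end Comb

section MoreAux

variable {E : Type*} [NormedAddCommGroup E] [InnerProductSpace ℝ E]

lemma aux_E0 {n m : ℕ} (w : Fin m → Fin n → ℝ) (hw : ∀ j, ∑ i, w j i = 1) :
    ∑ B : Fin m → Fin n, ∏ j, w j (B j) = 1 := by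
  rw [(Fintype.prod_sum w).symm.trans rfl]
  rw [Finset.prod_congr rfl (fun j _ => hw j), Finset.prod_const_one]

lemma aux_exp_lin {n m : ℕ} (w : Fin m → Fin n → ℝ) (hw : ∀ j, ∑ i, w j i = 1)
    (p : ℝ) (hwi : ∀ i, ∑ j, w j i = p) (t : Fin n → ℝ) :
    ∑ B : Fin m → Fin n, (∏ j, w j (B j)) * (∑ j, t (B j)) = p * ∑ i, t i := by
  calc ∑ B : Fin m → Fin n, (∏ j, w j (B j)) * (∑ j, t (B j))
      = ∑ B : Fin m → Fin n, ∑ j, (∏ j', w j' (B j')) * t (B j) := by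
        apply Finset.sum_congr rfl; intro B _; rw [Finset.mul_sum]
    _ = ∑ j, ∑ B : Fin m → Fin n, (∏ j', w j' (B j')) * t (B j) := Finset.sum_comm
    _ = ∑ j, ∑ i, w j i * t i := by
        apply Finset.sum_congr rfl; intro j _; exact aux_Esingle w hw j t
    _ = ∑ i, ∑ j, w j i * t i := Finset.sum_comm
    _ = p * ∑ i, t i := by
        rw [Finset.mul_sum]
        apply Finset.sum_congr rfl; intro i _
        rw [← Finset.sum_mul, hwi i]

lemma aux_exp_quad {n m : ℕ} (w : Fin m → Fin n → ℝ) (hw : ∀ j, ∑ i, w j i = 1)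
    (p : ℝ) (hwi : ∀ i, ∑ j, w j i = p) (uu : Fin n → E) :
    ∑ B : Fin m → Fin n, (∏ j, w j (B j)) * (∑ j, ∑ j', ⟪uu (B j), uu (B j')⟫)
      ≤ p * (∑ i, ‖uu i‖ ^ 2) + ‖p • ∑ i, uu i‖ ^ 2 := by
  classical
  set ubar : Fin m → E := fun j => ∑ i, w j i • uu i with hubar
  have hubarsum : ∑ j, ubar j = p • ∑ i, uu i := by
    rw [hubar, Finset.sum_comm, Finset.smul_sum]
    apply Finset.sum_congr rfl; intro i _
    rw [← Finset.sum_smul, hwi i]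
  have hval : ∀ j j' : Fin m, ∑ B : Fin m → Fin n, (∏ j'', w j'' (B j'')) * ⟪uu (B j), uu (B j')⟫
      = if j = j' then ∑ i, w j i * ‖uu i‖ ^ 2 else ⟪ubar j, ubar j'⟫ := by
    intro j j'
    by_cases h : j = j'
    · subst h
      rw [if_pos rfl]
      rw [aux_Esingle w hw j (fun i => ⟪uu i, uu i⟫)]
      apply Finset.sum_congr rfl; intro i _
      rw [real_inner_self_eq_norm_sq]
    · rw [if_neg h]
      rw [aux_Epair2 w hw j j' h (fun i i' => ⟪uu i, uu i'⟫)]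
      rw [hubar]
      rw [sum_inner]
      apply Finset.sum_congr rfl; intro i _
      rw [real_inner_smul_left, inner_sum, Finset.mul_sum]
      apply Finset.sum_congr rfl; intro i' _
      rw [real_inner_smul_right]
      ring
  calc ∑ B : Fin m → Fin n, (∏ j, w j (B j)) * (∑ j, ∑ j', ⟪uu (B j), uu (B j')⟫)
      = ∑ B : Fin m → Fin n, ∑ j, ∑ j', (∏ j'', w j'' (B j'')) * ⟪uu (B j), uu (B j')⟫ := by
        apply Finset.sum_congr rfl; intro B _
        rw [Finset.mul_sum]
        apply Finset.sum_congr rfl; intro j _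
        rw [Finset.mul_sum]
    _ = ∑ j, ∑ B : Fin m → Fin n, ∑ j', (∏ j'', w j'' (B j'')) * ⟪uu (B j), uu (B j')⟫ :=
        Finset.sum_comm
    _ = ∑ j, ∑ j', ∑ B : Fin m → Fin n, (∏ j'', w j'' (B j'')) * ⟪uu (B j), uu (B j')⟫ := by
        apply Finset.sum_congr rfl; intro j _; exact Finset.sum_comm
    _ = ∑ j, ∑ j', (⟪ubar j, ubar j'⟫ +
          if j = j' then (∑ i, w j i * ‖uu i‖ ^ 2 - ‖ubar j‖ ^ 2) else 0) := by
        apply Finset.sum_congr rfl; intro j _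
        apply Finset.sum_congr rfl; intro j' _
        rw [hval j j']
        by_cases h : j = j'
        · subst h; rw [if_pos rfl, if_pos rfl, real_inner_self_eq_norm_sq]; ring
        · rw [if_neg h, if_neg h]; ring
    _ = (∑ j, ∑ j', ⟪ubar j, ubar j'⟫) +
          ∑ j, ((∑ i, w j i * ‖uu i‖ ^ 2) - ‖ubar j‖ ^ 2) := by
        simp only [Finset.sum_add_distrib]
        congr 1
        apply Finset.sum_congr rfl; intro j _
        rw [Finset.sum_ite_eq Finset.univ j
          (fun _ => (∑ i, w j i * ‖uu i‖ ^ 2 - ‖ubar j‖ ^ 2))]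
        simp
    _ = ‖∑ j, ubar j‖ ^ 2 + ((∑ j, ∑ i, w j i * ‖uu i‖ ^ 2) - ∑ j, ‖ubar j‖ ^ 2) := by
        rw [Finset.sum_sub_distrib]
        congr 1
        rw [← real_inner_self_eq_norm_sq, sum_inner]
        apply Finset.sum_congr rfl; intro j _
        rw [inner_sum]
    _ ≤ p * (∑ i, ‖uu i‖ ^ 2) + ‖p • ∑ i, uu i‖ ^ 2 := by
        rw [hubarsum]
        have h1 : ∑ j, ∑ i, w j i * ‖uu i‖ ^ 2 = p * ∑ i, ‖uu i‖ ^ 2 := by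
          rw [Finset.sum_comm, Finset.mul_sum]
          apply Finset.sum_congr rfl; intro i _
          rw [← Finset.sum_mul, hwi i]
        rw [h1]
        have h2 : (0:ℝ) ≤ ∑ j, ‖ubar j‖ ^ 2 :=
          Finset.sum_nonneg fun j _ => sq_nonneg _
        linarith

set_option maxHeartbeats 1000000 in
lemma aux_arith (L Lf μ η Y A Gq Usum H Hn D mm nn γ : ℝ)
    (hL : 0 < L) (hLf : 0 < Lf) (hμ : 0 < μ) (hη : 0 < η) (hm : 0 < mm) (hn : 0 < nn)
    (hU : Usum ≤ 2*Gq + 2*A) (hHn : Hn ≤ Lf * H) (hHs : D + μ/2*Y ≤ H)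
    (hGq : Gq ≤ 2*L*(nn*D)) (hD : 0 ≤ D) (hY : 0 ≤ Y) (hA : 0 ≤ A) (hGq0 : 0 ≤ Gq)
    (hηval : η*(2*mm*Lf+6*L) = 1) (hγ1 : γ ≤ μ*mm*η/2) (hγ2 : γ ≤ mm/(3*nn)) (hγ0 : 0 ≤ γ) :
    (Y + 4*η^2*A) - 2*η*(mm*H) + η^2*((mm/nn)*Usum) + η^2*(mm^2*Hn)
        + 4*η^2*((mm/nn)*(Gq-A))
      ≤ (1-γ)*(Y + 4*η^2*A) := by
  set p : ℝ := mm/nn with hpdef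
  have hp0 : 0 ≤ p := by positivity
  have hpn : p * nn = mm := by rw [hpdef]; field_simp
  have hη2 : (0:ℝ) ≤ η^2 := sq_nonneg η
  have key : 2*η*mm = 4*η^2*mm^2*Lf + 12*η^2*mm*L := by
    calc 2*η*mm = 2*η*mm * (η*(2*mm*Lf+6*L)) := by rw [hηval]; ring
      _ = 4*η^2*mm^2*Lf + 12*η^2*mm*L := by ring
  have t1 : η^2*(p*Usum) ≤ η^2*(p*(2*Gq+2*A)) :=
    mul_le_mul_of_nonneg_left (mul_le_mul_of_nonneg_left hU hp0) hη2
  have t2 : η^2*(mm^2*Hn) ≤ η^2*(mm^2*(Lf*H)) :=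
    mul_le_mul_of_nonneg_left (mul_le_mul_of_nonneg_left hHn (by positivity)) hη2
  have t3 : η^2*(p*Gq) ≤ 2*η^2*L*(mm*D) := by
    have h := mul_le_mul_of_nonneg_left (mul_le_mul_of_nonneg_left hGq hp0) hη2
    calc η^2*(p*Gq) ≤ η^2*(p*(2*L*(nn*D))) := h
      _ = 2*η^2*L*((p*nn)*D) := by ring
      _ = 2*η^2*L*(mm*D) := by rw [hpn]
  have hmonos1 : (0:ℝ) ≤ η^2*mm^2*Lf := by positivity
  have hmonos2 : (0:ℝ) ≤ η^2*mm*L := by positivity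
  have hβlow : η*mm ≤ 2*η*mm - η^2*mm^2*Lf := by linarith [key, hmonos1, hmonos2]
  have hβ0 : 0 ≤ 2*η*mm - η^2*mm^2*Lf := by
    have : 0 ≤ η*mm := by positivity
    linarith
  have k2 : (2*η*mm - η^2*mm^2*Lf)*(D + μ/2*Y) ≤ (2*η*mm - η^2*mm^2*Lf)*H :=
    mul_le_mul_of_nonneg_left hHs hβ0
  have hDc : 12*η^2*L*mm ≤ 2*η*mm - η^2*mm^2*Lf := by linarith [key, hmonos1]
  have k1 : (12*η^2*L*mm - (2*η*mm - η^2*mm^2*Lf))*D ≤ 0 :=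
    mul_nonpos_of_nonpos_of_nonneg (by linarith) hD
  have hγβμ : γ ≤ (2*η*mm - η^2*mm^2*Lf)*μ/2 := by
    calc γ ≤ μ*mm*η/2 := hγ1
      _ ≤ (2*η*mm - η^2*mm^2*Lf)*μ/2 := by nlinarith [hβlow, hμ.le]
  have k3 : γ*Y ≤ ((2*η*mm - η^2*mm^2*Lf)*μ/2)*Y := mul_le_mul_of_nonneg_right hγβμ hY
  have hγp : γ ≤ p/2 := by
    calc γ ≤ mm/(3*nn) := hγ2
      _ ≤ p/2 := by
        rw [hpdef]
        rw [div_le_div_iff₀ (by positivity) (by norm_num)]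
        calc mm * 2 ≤ mm * 3 := by nlinarith [hm.le]
          _ = mm/nn*(3*nn)*1 := by field_simp
          _ ≤ mm/nn*(3*nn) := by rw [mul_one]
  have k4 : γ*(4*η^2*A) ≤ (p/2)*(4*η^2*A) :=
    mul_le_mul_of_nonneg_right hγp (by positivity)
  linarith [t1, t2, t3, k1, k2, k3, k4]

end MoreAux

section StepAux
open scoped RealInnerProductSpace

lemma aux_step_x {d n m : ℕ} (gradf : Fin n → EuclideanSpace ℝ (Fin d) → EuclideanSpace ℝ (Fin d))
    (η : ℝ) (S : MbState d n) (xstar : EuclideanSpace ℝ (Fin d)) (B : Fin m → Fin n) :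
    ‖(MbState.step gradf η S B).x - xstar‖ ^ 2
      = ‖S.x - xstar‖^2
        - 2*η*((∑ j, ⟪gradf (B j) S.x - S.alpha (B j), S.x - xstar⟫)
            + ⟪(m:ℝ) • S.abar, S.x - xstar⟫)
        + η^2*((∑ j, ∑ j', ⟪gradf (B j) S.x - S.alpha (B j), gradf (B j') S.x - S.alpha (B j')⟫)
          + 2*(∑ j, ⟪gradf (B j) S.x - S.alpha (B j), (m:ℝ) • S.abar⟫)
          + ‖(m:ℝ) • S.abar‖^2) := by
  set y : EuclideanSpace ℝ (Fin d) := S.x - xstar with hy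
  set uu : Fin n → EuclideanSpace ℝ (Fin d) := fun i => gradf i S.x - S.alpha i with huu
  set cc : EuclideanSpace ℝ (Fin d) := (m:ℝ) • S.abar with hcc
  have hvx : (MbState.step gradf η S B).x - xstar = y - η • ((∑ j, uu (B j)) + cc) := by
    show S.x - η • ((∑ j, gradf (B j) S.x) - (∑ j, S.alpha (B j)) + (m : ℝ) • S.abar) - xstar
      = y - η • ((∑ j, uu (B j)) + cc)
    rw [← Finset.sum_sub_distrib]
    rw [hy, hcc]
    abel
  rw [hvx]
  have hnorm : ‖y - η • ((∑ j, uu (B j)) + cc)‖ ^ 2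
      = ‖y‖^2 - 2*⟪y, η • ((∑ j, uu (B j)) + cc)⟫ + ‖η • ((∑ j, uu (B j)) + cc)‖^2 := by
    rw [norm_sub_sq_real]
  rw [hnorm]
  have h1 : ⟪y, η • ((∑ j, uu (B j)) + cc)⟫ = η * ((∑ j, ⟪uu (B j), y⟫) + ⟪cc, y⟫) := by
    rw [real_inner_smul_right]
    congr 1
    rw [real_inner_comm, inner_add_left, sum_inner]
  have h2 : ‖η • ((∑ j, uu (B j)) + cc)‖^2
      = η^2 * ((∑ j, ∑ j', ⟪uu (B j), uu (B j')⟫) + 2*(∑ j, ⟪uu (B j), cc⟫) + ‖cc‖^2) := by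
    rw [norm_smul, Real.norm_eq_abs, mul_pow, sq_abs]
    congr 1
    have hs1 : ‖∑ j, uu (B j)‖^2 = ∑ j, ∑ j', ⟪uu (B j), uu (B j')⟫ := by
      rw [← real_inner_self_eq_norm_sq, sum_inner]
      apply Finset.sum_congr rfl; intro j _
      rw [inner_sum]
    have hs2 : ⟪∑ j, uu (B j), cc⟫ = ∑ j, ⟪uu (B j), cc⟫ := sum_inner _ _ _
    rw [norm_add_sq_real, hs1, hs2]
  rw [h1, h2]
  ring

lemma aux_step_alpha {d n m : ℕ}
    (gradf : Fin n → EuclideanSpace ℝ (Fin d) → EuclideanSpace ℝ (Fin d))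
    (η : ℝ) (S : MbState d n) (xstar : EuclideanSpace ℝ (Fin d)) (B : Fin m → Fin n)
    (hinj : Function.Injective B) :
    ∑ i, ‖(MbState.step gradf η S B).alpha i - gradf i xstar‖^2
      = (∑ i, ‖S.alpha i - gradf i xstar‖^2)
        + ∑ j, (‖gradf (B j) S.x - gradf (B j) xstar‖^2
            - ‖S.alpha (B j) - gradf (B j) xstar‖^2) := by
  classical
  have hstep : ∀ i : Fin n, (MbState.step gradf η S B).alpha i
      = if ∃ j, B j = i then gradf i S.x else S.alpha i := fun i => rfl
  have hterm : ∀ i : Fin n, ‖(MbState.step gradf η S B).alpha i - gradf i xstar‖ ^ 2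
      = ‖S.alpha i - gradf i xstar‖^2
        + (if ∃ j, B j = i then
            (‖gradf i S.x - gradf i xstar‖^2 - ‖S.alpha i - gradf i xstar‖^2) else 0) := by
    intro i
    rw [hstep i]
    by_cases h : ∃ j, B j = i
    · rw [if_pos h, if_pos h]; ring
    · rw [if_neg h, if_neg h]; ring
  rw [Finset.sum_congr rfl (fun i _ => hterm i), Finset.sum_add_distrib]
  congr 1
  have himg : Finset.univ.filter (fun i => ∃ j, B j = i) = Finset.univ.image B := by
    ext i
    simp [eq_comm]
  rw [← Finset.sum_filter, himg, Finset.sum_image (fun x _ z _ h => hinj h)]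

end StepAux

set_option maxHeartbeats 16000000 in
theorem minibatch_potential_contraction
    {d n m : ℕ} (hd : 0 < d) (hn : 0 < n) (hm : 0 < m) (hmn : m ∣ n)
    (L Lf μ : ℝ) (hL : 0 < L) (hLf : 0 < Lf) (hμ : 0 < μ)
    (f : Fin n → EuclideanSpace ℝ (Fin d) → ℝ)
    (gradf : Fin n → EuclideanSpace ℝ (Fin d) → EuclideanSpace ℝ (Fin d))
    (hgrad : ∀ i x, HasGradientAt (f i) (gradf i x) x)
    (hconv : ∀ i, ConvexOn ℝ Set.univ (f i))
    (hsmooth : ∀ i (x y : EuclideanSpace ℝ (Fin d)), ‖gradf i x - gradf i y‖ ≤ L * ‖x - y‖)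
    (hFsmooth : ∀ x y : EuclideanSpace ℝ (Fin d),
      ‖((1 : ℝ) / n) • (∑ i, gradf i x) - ((1 : ℝ) / n) • (∑ i, gradf i y)‖ ≤ Lf * ‖x - y‖)
    (hFstrong : ∀ x y : EuclideanSpace ℝ (Fin d),
      μ * ‖x - y‖ ^ 2 ≤
        ⟪((1 : ℝ) / n) • (∑ i, gradf i x) - ((1 : ℝ) / n) • (∑ i, gradf i y), x - y⟫)
    (xstar : EuclideanSpace ℝ (Fin d))
    (hmin : ∀ x : EuclideanSpace ℝ (Fin d),
      (((1 : ℝ) / n) * ∑ i, f i xstar) ≤ ((1 : ℝ) / n) * ∑ i, f i x)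
    (hstarzero : (∑ i, gradf i xstar) = 0)
    (J : Fin n → Fin m)
    (hpart : ∀ j, (Finset.univ.filter (fun i => J i = j)).card = n / m)
    (η : ℝ) (hη : 0 < η)
    (S : MbState d n)
    (hηdef : η = 1 / (2 * (m : ℝ) * Lf + 6 * L))
    :
    (∑ B : Fin m → Fin n, mbWeight J B *
        (‖(MbState.step gradf η S B).x - xstar‖ ^ 2
          + 4 * η ^ 2 * ∑ i, ‖(MbState.step gradf η S B).alpha i - gradf i xstar‖ ^ 2))
      ≤ (1 - min (μ * (m : ℝ) / (4 * (m : ℝ) * Lf + 12 * L)) ((m : ℝ) / (3 * n))) *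
          (‖S.x - xstar‖ ^ 2 + 4 * η ^ 2 * ∑ i, ‖S.alpha i - gradf i xstar‖ ^ 2) := by
  classical
  have hn' : (0:ℝ) < n := by exact_mod_cast hn
  have hm' : (0:ℝ) < m := by exact_mod_cast hm
  set y : EuclideanSpace ℝ (Fin d) := S.x - xstar with hydef
  set aa : Fin n → EuclideanSpace ℝ (Fin d) := fun i => S.alpha i - gradf i xstar with haa
  set gg : Fin n → EuclideanSpace ℝ (Fin d) := fun i => gradf i S.x - gradf i xstar with hgg
  set uu : Fin n → EuclideanSpace ℝ (Fin d) := fun i => gradf i S.x - S.alpha i with huu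
  set cc : EuclideanSpace ℝ (Fin d) := (m:ℝ) • S.abar with hccdef
  set w : Fin m → Fin n → ℝ := fun j i => if J i = j then (m:ℝ)/n else 0 with hwdef
  set Y : ℝ := ‖y‖ ^ 2 with hYdef
  set A : ℝ := ∑ i, ‖S.alpha i - gradf i xstar‖ ^ 2 with hAdef
  have hA' : A = ∑ i, ‖aa i‖ ^ 2 := rfl
  set Gq : ℝ := ∑ i, ‖gg i‖ ^ 2 with hGqdef
  set Usum : ℝ := ∑ i, ‖uu i‖ ^ 2 with hUdef
  set hbar : EuclideanSpace ℝ (Fin d) := ((1:ℝ)/n) • ∑ i, gradf i S.x with hbardef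
  set H : ℝ := ⟪hbar, y⟫ with hHdef
  set D : ℝ := ((1:ℝ)/n) * ∑ i, f i S.x - ((1:ℝ)/n) * ∑ i, f i xstar with hDdef
  set ubarT : EuclideanSpace ℝ (Fin d) := ((m:ℝ)/n) • ∑ i, uu i with hubarTdef
  -- weight facts
  have hw : ∀ j, ∑ i, w j i = 1 := by
    intro j
    have h1 : ∑ i, w j i = ∑ i ∈ Finset.univ.filter (fun i => J i = j), (m:ℝ)/n := by
      rw [Finset.sum_filter]
    rw [h1, Finset.sum_const, hpart j]
    obtain ⟨k, hk⟩ := hmn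
    have hdiv : n / m = k := by rw [hk, Nat.mul_div_cancel_left k hm]
    have hk0 : 0 < k := by
      rcases Nat.eq_zero_or_pos k with h | h
      · subst h; rw [Nat.mul_zero] at hk; omega
      · exact h
    rw [hdiv, nsmul_eq_mul, hk]
    have hk0' : (0:ℝ) < k := by exact_mod_cast hk0
    push_cast
    field_simp
  have hwi : ∀ i, ∑ j, w j i = (m:ℝ)/n := by
    intro i
    rw [hwdef]
    simp only [Finset.sum_ite_eq Finset.univ (J i) (fun _ => (m:ℝ)/n), Finset.mem_univ,
      if_true]
  have hlin : ∀ t : Fin n → ℝ,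
      ∑ B : Fin m → Fin n, mbWeight J B * (∑ j, t (B j)) = ((m:ℝ)/n) * ∑ i, t i :=
    fun t => aux_exp_lin w hw ((m:ℝ)/n) hwi t
  have hE0 : ∑ B : Fin m → Fin n, mbWeight J B = 1 := aux_E0 w hw
  have hquad : ∑ B : Fin m → Fin n, mbWeight J B * (∑ j, ∑ j', ⟪uu (B j), uu (B j')⟫)
      ≤ ((m:ℝ)/n) * Usum + ‖ubarT‖ ^ 2 := aux_exp_quad w hw ((m:ℝ)/n) hwi uu
  -- pointwise rewrites
  have hxpart : ∀ B : Fin m → Fin n,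
      ‖(MbState.step gradf η S B).x - xstar‖ ^ 2
        = Y - 2*η*((∑ j, ⟪uu (B j), y⟫) + ⟪cc, y⟫)
          + η^2*((∑ j, ∑ j', ⟪uu (B j), uu (B j')⟫) + 2*(∑ j, ⟪uu (B j), cc⟫) + ‖cc‖^2) :=
    fun B => aux_step_x gradf η S xstar B
  have halpha : ∀ B : Fin m → Fin n,
      mbWeight J B * (∑ i, ‖(MbState.step gradf η S B).alpha i - gradf i xstar‖ ^ 2)
        = mbWeight J B * (A + ∑ j, (‖gg (B j)‖^2 - ‖aa (B j)‖^2)) := by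
    intro B
    rcases eq_or_ne (mbWeight J B) 0 with h0 | h0
    · rw [h0]; ring
    · have hJ : ∀ j, J (B j) = j := by
        intro j
        by_contra hne
        apply h0
        show (∏ j', w j' (B j')) = 0
        exact Finset.prod_eq_zero (Finset.mem_univ j) (by rw [hwdef]; simp [hne])
      have hinj : Function.Injective B := fun j j' h => by
        rw [← hJ j, ← hJ j', h]
      rw [aux_step_alpha gradf η S xstar B hinj]
  -- assembled expectation bound
  have hmulsum : ∀ B : Fin m → Fin n,
      mbWeight J B * (‖(MbState.step gradf η S B).x - xstar‖ ^ 2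
          + 4 * η ^ 2 * ∑ i, ‖(MbState.step gradf η S B).alpha i - gradf i xstar‖ ^ 2)
      = mbWeight J B * (Y + 4*η^2*A)
        - 2*η*(mbWeight J B * (∑ j, ⟪uu (B j), y⟫))
        - 2*η*(mbWeight J B * ⟪cc, y⟫)
        + η^2*(mbWeight J B * (∑ j, ∑ j', ⟪uu (B j), uu (B j')⟫))
        + 2*η^2*(mbWeight J B * (∑ j, ⟪uu (B j), cc⟫))
        + η^2*(mbWeight J B * ‖cc‖^2)
        + 4*η^2*(mbWeight J B * (∑ j, (‖gg (B j)‖^2 - ‖aa (B j)‖^2))) := by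
    intro B
    have h1 : mbWeight J B * (‖(MbState.step gradf η S B).x - xstar‖ ^ 2
          + 4 * η ^ 2 * ∑ i, ‖(MbState.step gradf η S B).alpha i - gradf i xstar‖ ^ 2)
        = mbWeight J B * ‖(MbState.step gradf η S B).x - xstar‖ ^ 2
          + 4 * η ^ 2 * (mbWeight J B
              * ∑ i, ‖(MbState.step gradf η S B).alpha i - gradf i xstar‖ ^ 2) := by
      ring
    rw [h1, halpha B, hxpart B]
    ring
  have hEtotal : ∑ B : Fin m → Fin n, mbWeight J B *
        (‖(MbState.step gradf η S B).x - xstar‖ ^ 2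
          + 4 * η ^ 2 * ∑ i, ‖(MbState.step gradf η S B).alpha i - gradf i xstar‖ ^ 2)
      ≤ (Y + 4*η^2*A)
        - 2*η*(((m:ℝ)/n) * (∑ i, ⟪uu i, y⟫))
        - 2*η*⟪cc, y⟫
        + η^2*(((m:ℝ)/n) * Usum + ‖ubarT‖ ^ 2)
        + 2*η^2*(((m:ℝ)/n) * (∑ i, ⟪uu i, cc⟫))
        + η^2*‖cc‖^2
        + 4*η^2*(((m:ℝ)/n) * (Gq - A)) := by
    rw [Finset.sum_congr rfl (fun B _ => hmulsum B)]
    rw [Finset.sum_add_distrib, Finset.sum_add_distrib, Finset.sum_add_distrib,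
      Finset.sum_add_distrib, Finset.sum_sub_distrib, Finset.sum_sub_distrib]
    have e1 : ∑ B : Fin m → Fin n, mbWeight J B * (Y + 4*η^2*A) = Y + 4*η^2*A := by
      rw [← Finset.sum_mul, hE0, one_mul]
    have e2 : ∑ B : Fin m → Fin n, 2*η*(mbWeight J B * (∑ j, ⟪uu (B j), y⟫))
        = 2*η*(((m:ℝ)/n) * (∑ i, ⟪uu i, y⟫)) := by
      rw [← Finset.mul_sum, hlin (fun i => ⟪uu i, y⟫)]
    have e3 : ∑ B : Fin m → Fin n, 2*η*(mbWeight J B * ⟪cc, y⟫) = 2*η*⟪cc, y⟫ := by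
      rw [← Finset.mul_sum, ← Finset.sum_mul, hE0, one_mul]
    have e4 : ∑ B : Fin m → Fin n, η^2*(mbWeight J B * (∑ j, ∑ j', ⟪uu (B j), uu (B j')⟫))
        ≤ η^2*(((m:ℝ)/n) * Usum + ‖ubarT‖ ^ 2) := by
      rw [← Finset.mul_sum]
      exact mul_le_mul_of_nonneg_left hquad (sq_nonneg η)
    have e5 : ∑ B : Fin m → Fin n, 2*η^2*(mbWeight J B * (∑ j, ⟪uu (B j), cc⟫))
        = 2*η^2*(((m:ℝ)/n) * (∑ i, ⟪uu i, cc⟫)) := by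
      rw [← Finset.mul_sum, hlin (fun i => ⟪uu i, cc⟫)]
    have e6 : ∑ B : Fin m → Fin n, η^2*(mbWeight J B * ‖cc‖^2) = η^2*‖cc‖^2 := by
      rw [← Finset.mul_sum, ← Finset.sum_mul, hE0, one_mul]
    have e7 : ∑ B : Fin m → Fin n, 4*η^2*(mbWeight J B * (∑ j, (‖gg (B j)‖^2 - ‖aa (B j)‖^2)))
        = 4*η^2*(((m:ℝ)/n) * (Gq - A)) := by
      rw [← Finset.mul_sum, hlin (fun i => ‖gg i‖^2 - ‖aa i‖^2), Finset.sum_sub_distrib,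
        hGqdef, hA']
    rw [e1, e2, e3, e5, e6, e7]
    linarith [e4]
  -- mean identities
  have hcc2 : cc = ((m:ℝ)/n) • ∑ i, S.alpha i := by
    show (m:ℝ) • (((1:ℝ)/n) • ∑ i, S.alpha i) = ((m:ℝ)/n) • ∑ i, S.alpha i
    rw [smul_smul, mul_one_div]
  have hubcc : ubarT + cc = (m:ℝ) • hbar := by
    rw [hubarTdef, hcc2]
    have hb : (m:ℝ) • hbar = ((m:ℝ)/n) • ∑ i, gradf i S.x := by
      rw [hbardef, smul_smul, mul_one_div]
    rw [hb, ← smul_add, ← Finset.sum_add_distrib]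
    congr 1
    apply Finset.sum_congr rfl; intro i _
    show gradf i S.x - S.alpha i + S.alpha i = gradf i S.x
    module
  have hmean1 : ((m:ℝ)/n) * (∑ i, ⟪uu i, y⟫) + ⟪cc, y⟫ = (m:ℝ) * H := by
    have h1 : ((m:ℝ)/n) * (∑ i, ⟪uu i, y⟫) = ⟪ubarT, y⟫ := by
      rw [hubarTdef, real_inner_smul_left, sum_inner]
    rw [h1, ← inner_add_left, hubcc, real_inner_smul_left, hHdef]
  have hmean2 : ‖ubarT‖^2 + 2*(((m:ℝ)/n) * (∑ i, ⟪uu i, cc⟫)) + ‖cc‖^2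
      = (m:ℝ)^2 * ‖hbar‖^2 := by
    have h1 : ((m:ℝ)/n) * (∑ i, ⟪uu i, cc⟫) = ⟪ubarT, cc⟫ := by
      rw [hubarTdef, real_inner_smul_left, sum_inner]
    rw [h1, ← norm_add_sq_real, hubcc, norm_smul, Real.norm_eq_abs,
      abs_of_nonneg hm'.le, mul_pow]
  -- analysis bounds
  have hUbound : Usum ≤ 2*Gq + 2*A := by
    rw [hUdef, hGqdef, hA']
    have h1 : ∀ i : Fin n, ‖uu i‖^2 ≤ 2*‖gg i‖^2 + 2*‖aa i‖^2 := by
      intro i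
      have he : uu i = gg i - aa i := by
        rw [huu, hgg, haa]
        show gradf i S.x - S.alpha i
          = (gradf i S.x - gradf i xstar) - (S.alpha i - gradf i xstar)
        abel
      rw [he]
      have h2 := norm_sub_le (gg i) (aa i)
      have h3 : ‖gg i - aa i‖^2 ≤ (‖gg i‖ + ‖aa i‖)^2 :=
        pow_le_pow_left₀ (norm_nonneg _) h2 2
      nlinarith [h3, sq_nonneg (‖gg i‖ - ‖aa i‖)]
    calc ∑ i, ‖uu i‖^2 ≤ ∑ i, (2*‖gg i‖^2 + 2*‖aa i‖^2) :=
          Finset.sum_le_sum (fun i _ => h1 i)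
      _ = 2*(∑ i, ‖gg i‖^2) + 2*(∑ i, ‖aa i‖^2) := by
          rw [Finset.sum_add_distrib, Finset.mul_sum, Finset.mul_sum]
  have hGqbound : Gq ≤ 2*L*((n:ℝ)*D) := by
    have h1 : ∀ i : Fin n, ‖gg i‖^2 ≤ 2*L*(f i S.x - f i xstar - ⟪gradf i xstar, y⟫) := by
      intro i
      exact aux_bregman (f i) (gradf i) (fun z => hgrad i z) (hconv i) L hL
        (hsmooth i) S.x xstar
    have h2 : Gq ≤ ∑ i, 2*L*(f i S.x - f i xstar - ⟪gradf i xstar, y⟫) :=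
      Finset.sum_le_sum (fun i _ => h1 i)
    have h3 : ∑ i, 2*L*(f i S.x - f i xstar - ⟪gradf i xstar, y⟫)
        = 2*L*((∑ i, f i S.x) - (∑ i, f i xstar) - ⟪∑ i, gradf i xstar, y⟫) := by
      rw [sum_inner, ← Finset.mul_sum]
      congr 1
      rw [Finset.sum_sub_distrib, Finset.sum_sub_distrib]
    rw [h3, hstarzero] at h2
    have h4 : ⟪(0 : EuclideanSpace ℝ (Fin d)), y⟫ = 0 := inner_zero_left y
    rw [h4] at h2
    have h5 : (n:ℝ)*D = (∑ i, f i S.x) - (∑ i, f i xstar) := by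
      rw [hDdef]
      field_simp
    rw [h5]
    linarith
  -- the average function
  set F : EuclideanSpace ℝ (Fin d) → ℝ := fun z => ((1:ℝ)/n) * ∑ i, f i z with hFdef
  set GF : EuclideanSpace ℝ (Fin d) → EuclideanSpace ℝ (Fin d) :=
    fun z => ((1:ℝ)/n) • ∑ i, gradf i z with hGFdef
  have hgradF : ∀ z, HasGradientAt F (GF z) z := by
    intro z
    rw [hasGradientAt_iff_hasFDerivAt]
    have hsum : HasFDerivAt (fun w => ∑ i, f i w)
        (∑ i, InnerProductSpace.toDual ℝ (EuclideanSpace ℝ (Fin d)) (gradf i z)) z :=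
      HasFDerivAt.fun_sum (fun i _ => hasGradientAt_iff_hasFDerivAt.1 (hgrad i z))
    have h2 := hsum.const_mul ((1:ℝ)/n)
    have h3 : InnerProductSpace.toDual ℝ (EuclideanSpace ℝ (Fin d)) (GF z)
        = ((1:ℝ)/n) • ∑ i, InnerProductSpace.toDual ℝ (EuclideanSpace ℝ (Fin d))
            (gradf i z) := by
      show InnerProductSpace.toDual ℝ (EuclideanSpace ℝ (Fin d))
          (((1:ℝ)/n) • ∑ i, gradf i z) = _
      rw [map_smul, map_sum]
    rw [h3]
    exact h2
  have hconvF : ConvexOn ℝ Set.univ F := by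
    refine ⟨convex_univ, ?_⟩
    intro p hp q hq α β hα hβ hab
    have h1 : ∀ i : Fin n, f i (α•p + β•q) ≤ α * f i p + β * f i q := by
      intro i
      have := (hconv i).2 (Set.mem_univ p) (Set.mem_univ q) hα hβ hab
      simpa [smul_eq_mul] using this
    have h2 : ∑ i, f i (α•p + β•q) ≤ α * ∑ i, f i p + β * ∑ i, f i q := by
      calc ∑ i, f i (α•p + β•q) ≤ ∑ i, (α * f i p + β * f i q) :=
            Finset.sum_le_sum (fun i _ => h1 i)
        _ = α * ∑ i, f i p + β * ∑ i, f i q := by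
            rw [Finset.sum_add_distrib, ← Finset.mul_sum, ← Finset.mul_sum]
    show ((1:ℝ)/n) * ∑ i, f i (α•p + β•q)
      ≤ α • (((1:ℝ)/n) * ∑ i, f i p) + β • (((1:ℝ)/n) * ∑ i, f i q)
    simp only [smul_eq_mul]
    have hn0 : (0:ℝ) ≤ 1/(n:ℝ) := by positivity
    have h4 := mul_le_mul_of_nonneg_left h2 hn0
    nlinarith [h4]
  have hGFstar : GF xstar = 0 := by
    show ((1:ℝ)/n) • ∑ i, gradf i xstar = 0
    rw [hstarzero, smul_zero]
  have hbarGF : hbar = GF S.x := rfl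
  have hHn : ‖hbar‖^2 ≤ Lf * H := by
    have h := aux_coco F GF hgradF hconvF Lf hLf hFsmooth S.x xstar
    rw [hGFstar, sub_zero, ← hbarGF] at h
    exact h
  have hHstrong : D + μ/2*Y ≤ H := by
    have h := aux_strong F GF hgradF μ hFstrong S.x xstar
    exact h
  have hD0 : 0 ≤ D := by
    have := hmin S.x
    rw [hDdef]
    linarith
  have hY0 : 0 ≤ Y := sq_nonneg _
  have hA0 : 0 ≤ A := Finset.sum_nonneg fun i _ => sq_nonneg _
  have hGq0 : 0 ≤ Gq := by
    rw [hGqdef]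
    exact Finset.sum_nonneg fun i _ => sq_nonneg _
  -- step size and contraction factor
  have hηval : η * (2*(m:ℝ)*Lf + 6*L) = 1 := by
    rw [hηdef]
    field_simp
  set γ : ℝ := min (μ * (m : ℝ) / (4 * (m : ℝ) * Lf + 12 * L)) ((m : ℝ) / (3 * n)) with hγdef
  have hγ1 : γ ≤ μ*(m:ℝ)*η/2 := by
    have h1 : μ * (m : ℝ) / (4 * (m : ℝ) * Lf + 12 * L) = μ*(m:ℝ)*η/2 := by
      rw [hηdef]
      have hden : (0:ℝ) < 2*(m:ℝ)*Lf + 6*L := by positivity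
      field_simp
      ring
    rw [hγdef, ← h1]
    exact min_le_left _ _
  have hγ2 : γ ≤ (m:ℝ)/(3*(n:ℝ)) := min_le_right _ _
  have hγ0 : 0 ≤ γ := le_min (by positivity) (by positivity)
  -- final assembly
  have harith := aux_arith L Lf μ η Y A Gq Usum H (‖hbar‖^2) D (m:ℝ) (n:ℝ) γ
    hL hLf hμ hη hm' hn' hUbound hHn hHstrong hGqbound hD0 hY0 hA0 hGq0 hηval hγ1 hγ2 hγ0
  have hexp : (Y + 4*η^2*A)
        - 2*η*(((m:ℝ)/n) * (∑ i, ⟪uu i, y⟫))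
        - 2*η*⟪cc, y⟫
        + η^2*(((m:ℝ)/n) * Usum + ‖ubarT‖ ^ 2)
        + 2*η^2*(((m:ℝ)/n) * (∑ i, ⟪uu i, cc⟫))
        + η^2*‖cc‖^2
        + 4*η^2*(((m:ℝ)/n) * (Gq - A))
      = (Y + 4*η^2*A) - 2*η*((m:ℝ)*H) + η^2*(((m:ℝ)/n)*Usum) + η^2*((m:ℝ)^2*(‖hbar‖^2))
        + 4*η^2*(((m:ℝ)/n)*(Gq-A)) := by
    have e1 : 2*η*(((m:ℝ)/n) * (∑ i, ⟪uu i, y⟫)) + 2*η*⟪cc, y⟫ = 2*η*((m:ℝ)*H) := by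
      rw [← hmean1]; ring
    have e2 : η^2*‖ubarT‖^2 + 2*η^2*(((m:ℝ)/n) * (∑ i, ⟪uu i, cc⟫)) + η^2*‖cc‖^2
        = η^2*((m:ℝ)^2*‖hbar‖^2) := by
      rw [← hmean2]; ring
    linarith [e1, e2]
  calc (∑ B : Fin m → Fin n, mbWeight J B *
        (‖(MbState.step gradf η S B).x - xstar‖ ^ 2
          + 4 * η ^ 2 * ∑ i, ‖(MbState.step gradf η S B).alpha i - gradf i xstar‖ ^ 2))
      ≤ (Y + 4*η^2*A)
        - 2*η*(((m:ℝ)/n) * (∑ i, ⟪uu i, y⟫))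
        - 2*η*⟪cc, y⟫
        + η^2*(((m:ℝ)/n) * Usum + ‖ubarT‖ ^ 2)
        + 2*η^2*(((m:ℝ)/n) * (∑ i, ⟪uu i, cc⟫))
        + η^2*‖cc‖^2
        + 4*η^2*(((m:ℝ)/n) * (Gq - A)) := hEtotal
    _ = (Y + 4*η^2*A) - 2*η*((m:ℝ)*H) + η^2*(((m:ℝ)/n)*Usum) + η^2*((m:ℝ)^2*(‖hbar‖^2))
        + 4*η^2*(((m:ℝ)/n)*(Gq-A)) := hexp
    _ ≤ (1-γ)*(Y + 4*η^2*A) := harith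
    _ = (1 - γ) * (Y + 4 * η ^ 2 * A) := by ring
end
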